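/- arXiv:1908.07449 — 2 statements merged into one kernel-verified Lean document; each statement's English description precedes it below -/
import Mathlib

section
/- (Four-operator splitting with conservative step-length; generalizes forward-backward-forward and forward-backward-half-forward splitting.) Suppose Assumption 4 holds and the step sizes satisfy γ_k ∈ [ε, 1/ε] and γ_k·(β_E + √(β_E² + 16(L_D + ‖K‖)²)) ≤ 4 − ε for some ε ∈ (0, 1). Let x_0 ∈ H and for each k: let x̂_k be the unique point with x_k − γ_k(D x_k + K x_k + E x_k) − x̂_k ∈ γ_k·B x̂_k, and set x_{k+1} := x̂_k − γ_k·((D + K)x̂_k − (D + K)x_k). Then x_k converges weakly to some x̄ ∈ Z := zer(B + D + E + K). Moreover, if H is finite-dimensional and there exist κ ≥ 0, ν > 0 and an open set U ⊇ Z with dist(x, Z) ≤ κ‖v‖ whenever x ∈ U, v − Dx − Ex − Kx ∈ Bx and ‖v‖ < ν, then there exist K₀ ∈ ℕ, c ∈ [0, 1), R ≥ 0 and x̄ ∈ Z such that dist(x_{k+1}, Z) ≤ c·dist(x_k, Z) and ‖x_k − x̄‖ ≤ R·c^k for all k ≥ K₀. -/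
open Filter Topology

/-- A set-valued operator (identified with its graph) is monotone. -/
def IsMonotoneOp {H : Type*} [NormedAddCommGroup H] [InnerProductSpace ℝ H]
    (A : H → Set H) : Prop :=
  ∀ ⦃x u y v⦄, u ∈ A x → v ∈ A y → (0:ℝ) ≤ inner ℝ (u - v) (x - y)

/-- A set-valued operator is maximally monotone. -/
def IsMaxMonotoneOp {H : Type*} [NormedAddCommGroup H] [InnerProductSpace ℝ H]
    (A : H → Set H) : Prop :=
  IsMonotoneOp A ∧ ∀ x u, (∀ y v, v ∈ A y → (0:ℝ) ≤ inner ℝ (u - v) (x - y)) → u ∈ A x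

/-- Weak convergence of a sequence in a Hilbert space. -/
def WeakConvergesTo {H : Type*} [NormedAddCommGroup H] [InnerProductSpace ℝ H]
    (x : ℕ → H) (xbar : H) : Prop :=
  ∀ y : H, Tendsto (fun k => (inner ℝ (x k) y : ℝ)) atTop (nhds (inner ℝ xbar y))

local notation "⟪" x ", " y "⟫" => @inner ℝ _ _ x y

section FourOpHelpers

variable {H : Type*} [NormedAddCommGroup H] [InnerProductSpace ℝ H]

lemma real_limit_ultra (U : Ultrafilter ℕ) (f : ℕ → ℝ) (M : ℝ) (hf : ∀ k, |f k| ≤ M) :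
    ∃ c, |c| ≤ M ∧ Tendsto f U (𝓝 c) := by
  have hmem : ∀ k, f k ∈ Set.Icc (-M) M := fun k => abs_le.mp (hf k)
  obtain ⟨c, hc, hle⟩ := (isCompact_Icc (a := -M) (b := M)).ultrafilter_le_nhds (U.map f)
    (le_principal_iff.2 (Filter.mem_map.2 (Filter.univ_mem' hmem)))
  exact ⟨c, abs_le.mpr ⟨hc.1, hc.2⟩, hle⟩

lemma weak_limit_ultra [CompleteSpace H] (U : Ultrafilter ℕ) (x : ℕ → H) (M : ℝ)
    (hx : ∀ k, ‖x k‖ ≤ M) :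
    ∃ w : H, ‖w‖ ≤ M ∧ ∀ y, Tendsto (fun k => ⟪x k, y⟫) U (𝓝 ⟪w, y⟫) := by
  have hbd : ∀ y : H, ∀ k, |⟪x k, y⟫| ≤ M * ‖y‖ := fun y k =>
    (abs_real_inner_le_norm (x k) y).trans
      (mul_le_mul_of_nonneg_right (hx k) (norm_nonneg y))
  have hex : ∀ y : H, ∃ c, |c| ≤ M * ‖y‖ ∧ Tendsto (fun k => ⟪x k, y⟫) U (𝓝 c) := fun y =>
    real_limit_ultra U _ _ (hbd y)
  choose L hL1 hL2 using hex
  have hadd : ∀ y z, L (y + z) = L y + L z := by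
    intro y z
    refine tendsto_nhds_unique ?_ ((hL2 y).add (hL2 z))
    have : (fun k => ⟪x k, y + z⟫) = fun k => ⟪x k, y⟫ + ⟪x k, z⟫ := by
      funext k; exact inner_add_right _ _ _
    rw [← this]; exact hL2 (y + z)
  have hsmul : ∀ (c : ℝ) (y : H), L (c • y) = c * L y := by
    intro c y
    refine tendsto_nhds_unique ?_ ((hL2 y).const_mul c)
    have : (fun k => ⟪x k, c • y⟫) = fun k => c * ⟪x k, y⟫ := by
      funext k; exact real_inner_smul_right _ _ _
    rw [← this]; exact hL2 (c • y)
  let φ : H →ₗ[ℝ] ℝ := { toFun := L, map_add' := hadd, map_smul' := hsmul }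
  let ℓ : H →L[ℝ] ℝ := φ.mkContinuous M (fun y => by
    rw [Real.norm_eq_abs]; exact hL1 y)
  refine ⟨(InnerProductSpace.toDual ℝ H).symm ℓ, ?_, ?_⟩
  · set w := (InnerProductSpace.toDual ℝ H).symm ℓ with hw
    have hkey : ⟪w, w⟫ = L w := InnerProductSpace.toDual_symm_apply
    by_cases h : ‖w‖ ≤ M
    · exact h
    · exfalso
      have h1 : ‖w‖ ^ 2 = L w := by rw [← real_inner_self_eq_norm_sq]; exact hkey
      have h2 : |L w| ≤ M * ‖w‖ := hL1 w
      have hM : 0 ≤ M := le_trans (norm_nonneg (x 0)) (hx 0)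
      have := abs_le.mp h2
      nlinarith [norm_nonneg w]
  · intro y
    have hkey : ⟪(InnerProductSpace.toDual ℝ H).symm ℓ, y⟫ = L y :=
      InnerProductSpace.toDual_symm_apply
    rw [hkey]; exact hL2 y

/-- auxiliary function for the Minty argument -/
noncomputable def mphi {H : Type*} [NormedAddCommGroup H] [InnerProductSpace ℝ H] (y v x u : H) : ℝ :=
  ⟪x, v⟫ + ⟪u, y⟫ - ⟪y, v⟫ + ‖x‖^2/2 + ‖u‖^2/2

lemma mphi_def (y v x u : H) :
    mphi y v x u = ⟪x, v⟫ + ⟪u, y⟫ - ⟪y, v⟫ + ‖x‖^2/2 + ‖u‖^2/2 := rfl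

lemma mphi_alt (y v x u : H) :
    mphi y v x u = ⟪x, u⟫ - ⟪u - v, x - y⟫ + ‖x‖^2/2 + ‖u‖^2/2 := by
  have h1 : ⟪u - v, x - y⟫ = ⟪u,x⟫ - ⟪u,y⟫ - ⟪v,x⟫ + ⟪v,y⟫ := by
    simp [inner_sub_left, inner_sub_right]; ring
  rw [mphi_def, h1, real_inner_comm x u, real_inner_comm x v, real_inner_comm y v]; ring

set_option maxHeartbeats 1000000 in
lemma minty_zero [CompleteSpace H] (A : H → Set H) (hA : IsMaxMonotoneOp A)
    (y₀ v₀ : H) (h₀ : v₀ ∈ A y₀) : ∃ x u, u ∈ A x ∧ x + u = 0 := by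
  classical
  have hdich : ∀ x u : H, ∃ y v, v ∈ A y ∧ ‖x + u‖^2/2 ≤ mphi y v x u := by
    intro x u
    have hnorm : ‖x + u‖^2 = ‖x‖^2 + 2*⟪x,u⟫ + ‖u‖^2 := norm_add_sq_real x u
    by_cases hmem : u ∈ A x
    · refine ⟨x, u, hmem, ?_⟩
      rw [mphi_alt x u x u]
      simp only [sub_self, inner_zero_left]
      linarith
    · have hcon := mt (hA.2 x u) hmem
      push_neg at hcon
      obtain ⟨y, v, hv, hlt⟩ := hcon
      refine ⟨y, v, hv, ?_⟩
      rw [mphi_alt y v x u]; linarith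
  obtain ⟨c₀, hc₀def⟩ : ∃ c₀ : ℝ, c₀ = ⟪y₀,v₀⟫ + ‖y₀‖^2/2 + ‖v₀‖^2/2 := ⟨_, rfl⟩
  have hub : ∀ y v, v ∈ A y → mphi y v y₀ v₀ ≤ c₀ := by
    intro y v hv
    have hm := hA.1 h₀ hv
    rw [mphi_alt y v y₀ v₀, hc₀def]; linarith
  have hc₀S : ∃ xx uu : H, ∀ y v, v ∈ A y → mphi y v xx uu ≤ c₀ := ⟨y₀, v₀, hub⟩
  have hS0 : ∀ c : ℝ, (∃ xx uu : H, ∀ y v, v ∈ A y → mphi y v xx uu ≤ c) → 0 ≤ c := by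
    rintro c ⟨xx, uu, hxu⟩
    obtain ⟨y, v, hv, hge⟩ := hdich xx uu
    have h' := hxu y v hv
    have h'' := sq_nonneg ‖xx + uu‖
    linarith
  obtain ⟨μ, hμdef⟩ : ∃ μ : ℝ, μ = sInf {c : ℝ | ∃ xx uu : H, ∀ y v, v ∈ A y → mphi y v xx uu ≤ c} :=
    ⟨_, rfl⟩
  have hbdd : BddBelow {c : ℝ | ∃ xx uu : H, ∀ y v, v ∈ A y → mphi y v xx uu ≤ c} :=
    ⟨0, fun c hc => hS0 c hc⟩
  have hμ0 : 0 ≤ μ := hμdef ▸ le_csInf ⟨c₀, hc₀S⟩ hS0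
  have hμc : μ ≤ c₀ := hμdef ▸ csInf_le hbdd hc₀S
  have h2 : ∀ (xx uu : H) (c : ℝ), (∀ y v, v ∈ A y → mphi y v xx uu ≤ c) → μ ≤ c := by
    intro xx uu c hc
    exact hμdef ▸ csInf_le hbdd ⟨xx, uu, hc⟩
  have hseq : ∀ k : ℕ, ∃ pp : H × H, ∀ y v, v ∈ A y → mphi y v pp.1 pp.2 ≤ μ + 1/(k+1) := by
    intro k
    have hpos : (0:ℝ) < 1/(k+1) := by positivity
    obtain ⟨c, hcS, hclt⟩ := exists_lt_of_csInf_lt (s := {c : ℝ | ∃ xx uu : H, ∀ y v, v ∈ A y → mphi y v xx uu ≤ c}) ⟨c₀, hc₀S⟩ (by rw [← hμdef]; linarith : sInf _ < μ + 1/(k+1))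
    obtain ⟨xx, uu, hxu⟩ := hcS
    exact ⟨(xx, uu), fun y v hv => (hxu y v hv).trans hclt.le⟩
  choose p hp using hseq
  -- boundedness of the minimizing sequence
  have hbound : ∃ Mb : ℝ, 0 ≤ Mb ∧ ∀ k, ‖(p k).1‖ ≤ Mb ∧ ‖(p k).2‖ ≤ Mb := by
    obtain ⟨r, hrdef⟩ : ∃ r : ℝ, r = ‖y₀‖ + ‖v₀‖ := ⟨_, rfl⟩
    obtain ⟨c₁, hc₁def⟩ : ∃ c₁ : ℝ, c₁ = c₀ + 1 + |⟪y₀,v₀⟫| := ⟨_, rfl⟩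
    have hc₀0 : 0 ≤ c₀ := hS0 c₀ hc₀S
    have hc₁0 : 0 ≤ c₁ := by rw [hc₁def]; positivity
    have hr0 : 0 ≤ r := by rw [hrdef]; positivity
    refine ⟨2*r + Real.sqrt (4*c₁ + 4*r^2), by positivity, fun k => ?_⟩
    have hk := hp k y₀ v₀ h₀
    rw [mphi_def] at hk
    have h1k : 1/((k:ℝ)+1) ≤ 1 := by
      rw [div_le_one (by positivity)]; simp
    have ha0 : (0:ℝ) ≤ ‖(p k).1‖ := norm_nonneg _
    have hb0 : (0:ℝ) ≤ ‖(p k).2‖ := norm_nonneg _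
    have habs1 := (abs_le.mp (abs_real_inner_le_norm (p k).1 v₀)).1
    have habs2 := (abs_le.mp (abs_real_inner_le_norm (p k).2 y₀)).1
    have habs3 := le_abs_self ⟪y₀,v₀⟫
    have hv0r : ‖v₀‖ ≤ r := by rw [hrdef]; linarith [norm_nonneg y₀]
    have hy0r : ‖y₀‖ ≤ r := by rw [hrdef]; linarith [norm_nonneg v₀]
    have hm1 : ‖(p k).1‖ * ‖v₀‖ ≤ ‖(p k).1‖ * r := mul_le_mul_of_nonneg_left hv0r ha0
    have hm2 : ‖(p k).2‖ * ‖y₀‖ ≤ ‖(p k).2‖ * r := mul_le_mul_of_nonneg_left hy0r hb0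
    have key : ‖(p k).1‖^2/2 + ‖(p k).2‖^2/2 ≤ c₁ + r*‖(p k).1‖ + r*‖(p k).2‖ := by
      rw [hc₁def]
      linarith
    have hsum : (‖(p k).1‖+‖(p k).2‖)^2/4 ≤ c₁ + r*(‖(p k).1‖+‖(p k).2‖) := by
      nlinarith [sq_nonneg (‖(p k).1‖-‖(p k).2‖)]
    have hsq : (‖(p k).1‖ + ‖(p k).2‖ - 2*r)^2 ≤ 4*c₁ + 4*r^2 := by nlinarith
    have hroot : ‖(p k).1‖ + ‖(p k).2‖ - 2*r ≤ Real.sqrt (4*c₁ + 4*r^2) := by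
      have h5 := Real.sqrt_le_sqrt hsq
      rw [Real.sqrt_sq_eq_abs] at h5
      exact (le_abs_self _).trans h5
    have hrtn := Real.sqrt_nonneg (4*c₁ + 4*r^2)
    constructor <;> linarith
  obtain ⟨Mb, hMb0, hMb⟩ := hbound
  have hUle : ((Ultrafilter.of atTop : Ultrafilter ℕ) : Filter ℕ) ≤ atTop := Ultrafilter.of_le _
  obtain ⟨xb, hxbM, hxb⟩ := weak_limit_ultra (Ultrafilter.of atTop) (fun k => (p k).1) Mb
    (fun k => (hMb k).1)
  obtain ⟨ub, hubM, hub2⟩ := weak_limit_ultra (Ultrafilter.of atTop) (fun k => (p k).2) Mb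
    (fun k => (hMb k).2)
  have hnormbd : ∀ (f : ℕ → H), (∀ k, ‖f k‖ ≤ Mb) → ∀ k, |‖f k‖^2| ≤ Mb^2 := by
    intro f hf k
    rw [abs_of_nonneg (by positivity)]
    have := hf k
    nlinarith [norm_nonneg (f k)]
  obtain ⟨rx, hrxM, hrx⟩ := real_limit_ultra (Ultrafilter.of atTop) (fun k => ‖(p k).1‖^2) (Mb^2)
    (hnormbd _ (fun k => (hMb k).1))
  obtain ⟨ru, hruM, hru⟩ := real_limit_ultra (Ultrafilter.of atTop) (fun k => ‖(p k).2‖^2) (Mb^2)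
    (hnormbd _ (fun k => (hMb k).2))
  have hlsc : ∀ (f : ℕ → H) (w : H) (rr : ℝ),
      (∀ y, Tendsto (fun k => ⟪f k, y⟫) (Ultrafilter.of atTop : Ultrafilter ℕ) (𝓝 ⟪w, y⟫)) →
      Tendsto (fun k => ‖f k‖^2) (Ultrafilter.of atTop : Ultrafilter ℕ) (𝓝 rr) → ‖w‖^2 ≤ rr := by
    intro f w rr hweak hnorm
    have h1 : Tendsto (fun k => 2*⟪f k, w⟫ - ‖w‖^2) (Ultrafilter.of atTop : Ultrafilter ℕ)
        (𝓝 (2*⟪w,w⟫ - ‖w‖^2)) := (((hweak w).const_mul 2).sub tendsto_const_nhds)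
    have h2 : ∀ k, 2*⟪f k, w⟫ - ‖w‖^2 ≤ ‖f k‖^2 := by
      intro k
      have := norm_sub_sq_real (f k) w
      nlinarith [sq_nonneg ‖f k - w‖]
    have := le_of_tendsto_of_tendsto' h1 hnorm h2
    rw [real_inner_self_eq_norm_sq] at this
    linarith
  have hrxge : ‖xb‖^2 ≤ rx := hlsc _ _ _ hxb hrx
  have hruge : ‖ub‖^2 ≤ ru := hlsc _ _ _ hub2 hru
  -- (1) : the limit point is a minimizer
  have h1 : ∀ y v, v ∈ A y → mphi y v xb ub ≤ μ := by
    intro y v hv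
    have hlim : Tendsto (fun k => ⟪(p k).1, v⟫ + ⟪(p k).2, y⟫ - ⟪y,v⟫
        + ‖(p k).1‖^2/2 + ‖(p k).2‖^2/2) (Ultrafilter.of atTop : Ultrafilter ℕ)
        (𝓝 (⟪xb,v⟫ + ⟪ub,y⟫ - ⟪y,v⟫ + rx/2 + ru/2)) :=
      (((((hxb v).add (hub2 y)).sub tendsto_const_nhds).add (hrx.div_const 2)).add
        (hru.div_const 2))
    have hμlim : Tendsto (fun k : ℕ => μ + 1/((k:ℝ)+1)) (Ultrafilter.of atTop : Ultrafilter ℕ)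
        (𝓝 (μ + 0)) :=
      (tendsto_const_nhds.add (tendsto_one_div_add_atTop_nhds_zero_nat.mono_left hUle))
    have hple : ∀ k, ⟪(p k).1, v⟫ + ⟪(p k).2, y⟫ - ⟪y,v⟫
        + ‖(p k).1‖^2/2 + ‖(p k).2‖^2/2 ≤ μ + 1/((k:ℝ)+1) := by
      intro k
      have := hp k y v hv
      rw [mphi_def] at this
      exact_mod_cast this
    have hle := le_of_tendsto_of_tendsto' hlim hμlim hple
    rw [add_zero] at hle
    rw [mphi_def]
    linarith
  -- (II)
  have hII : ‖xb + ub‖^2/2 ≤ μ := by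
    obtain ⟨y, v, hv, hge⟩ := hdich xb ub
    exact hge.trans (h1 y v hv)
  -- (III)
  have hIII : ∀ y v, v ∈ A y → μ + ‖xb‖^2/2 + ‖ub‖^2/2 ≤ ⟪y,v⟫ + ⟪xb,y⟫ + ⟪ub,v⟫ := by
    intro y v hv
    obtain ⟨C1, hC1def⟩ : ∃ C1 : ℝ,
      C1 = ⟪y,v⟫ + ⟪xb, y⟫ - ‖xb‖^2 + ⟪ub, v⟫ - ‖ub‖^2 + ‖xb‖^2/2 + ‖ub‖^2/2 - μ := ⟨_, rfl⟩
    obtain ⟨C2, hC2def⟩ : ∃ C2 : ℝ, C2 = (‖y - xb‖^2 + ‖v - ub‖^2)/2 := ⟨_, rfl⟩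
    have hC2 : 0 ≤ C2 := by rw [hC2def]; positivity
    have hkey : ∀ t : ℝ, 0 < t → t ≤ 1 → 0 ≤ C1 + t*C2 := by
      intro t ht0 ht1
      have hub' : ∀ y' v', v' ∈ A y' →
          mphi y' v' (xb + t•(y - xb)) (ub + t•(v - ub)) ≤
          (1-t)*(μ - ‖xb‖^2/2 - ‖ub‖^2/2) + t*⟪y,v⟫
          + ‖xb + t•(y - xb)‖^2/2 + ‖ub + t•(v - ub)‖^2/2 := by
        intro y' v' hv'
        have hb1 : ⟪xb,v'⟫ + ⟪ub,y'⟫ - ⟪y',v'⟫ ≤ μ - ‖xb‖^2/2 - ‖ub‖^2/2 := by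
          have := h1 y' v' hv'
          rw [mphi_def] at this
          linarith
        have hb2 : ⟪y,v'⟫ + ⟪v,y'⟫ - ⟪y',v'⟫ ≤ ⟪y,v⟫ := by
          have hm := hA.1 hv hv'
          have hexp : ⟪v - v', y - y'⟫ = ⟪v,y⟫ - ⟪v,y'⟫ - ⟪v',y⟫ + ⟪v',y'⟫ := by
            simp [inner_sub_left, inner_sub_right]; ring
          rw [hexp] at hm
          have e1 : ⟪y,v'⟫ = ⟪v',y⟫ := real_inner_comm _ _
          have e2 : ⟪y,v⟫ = ⟪v,y⟫ := real_inner_comm _ _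
          have e3 : ⟪y',v'⟫ = ⟪v',y'⟫ := real_inner_comm _ _
          linarith
        have haff : ⟪xb + t•(y - xb), v'⟫ + ⟪ub + t•(v - ub), y'⟫ - ⟪y',v'⟫
            = (1-t)*(⟪xb,v'⟫ + ⟪ub,y'⟫ - ⟪y',v'⟫) + t*(⟪y,v'⟫ + ⟪v,y'⟫ - ⟪y',v'⟫) := by
          simp [inner_add_left, real_inner_smul_left, inner_sub_left]; ring
        rw [mphi_def, haff]
        have e1 : (1-t)*(⟪xb,v'⟫ + ⟪ub,y'⟫ - ⟪y',v'⟫) ≤ (1-t)*(μ - ‖xb‖^2/2 - ‖ub‖^2/2) :=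
          mul_le_mul_of_nonneg_left hb1 (by linarith)
        have e2 : t*(⟪y,v'⟫ + ⟪v,y'⟫ - ⟪y',v'⟫) ≤ t*⟪y,v⟫ :=
          mul_le_mul_of_nonneg_left hb2 ht0.le
        linarith
      have hμle' : μ ≤ (1-t)*(μ - ‖xb‖^2/2 - ‖ub‖^2/2) + t*⟪y,v⟫
          + ‖xb + t•(y - xb)‖^2/2 + ‖ub + t•(v - ub)‖^2/2 :=
        h2 _ _ _ hub'
      have hn1 : ‖xb + t•(y - xb)‖^2 = ‖xb‖^2 + 2*t*⟪xb, y - xb⟫ + t^2*‖y - xb‖^2 := by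
        rw [norm_add_sq_real, real_inner_smul_right, norm_smul, Real.norm_eq_abs,
          abs_of_pos ht0]
        ring
      have hn2 : ‖ub + t•(v - ub)‖^2 = ‖ub‖^2 + 2*t*⟪ub, v - ub⟫ + t^2*‖v - ub‖^2 := by
        rw [norm_add_sq_real, real_inner_smul_right, norm_smul, Real.norm_eq_abs,
          abs_of_pos ht0]
        ring
      have hi1 : ⟪xb, y - xb⟫ = ⟪xb, y⟫ - ‖xb‖^2 := by
        rw [inner_sub_right, real_inner_self_eq_norm_sq]
      have hi2 : ⟪ub, v - ub⟫ = ⟪ub, v⟫ - ‖ub‖^2 := by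
        rw [inner_sub_right, real_inner_self_eq_norm_sq]
      rw [hn1, hn2, hi1, hi2] at hμle'
      have hdiv : 0 ≤ t*C1 + t^2*C2 := by
        rw [hC1def, hC2def]
        linarith [hμle']
      have hfact : t*(C1 + t*C2) = t*C1 + t^2*C2 := by ring
      have h' : 0 ≤ t*(C1 + t*C2) := by rw [hfact]; exact hdiv
      exact (mul_nonneg_iff_of_pos_left ht0).mp h'
    have hC1 : 0 ≤ C1 := by
      by_contra hneg
      push_neg at hneg
      have ht0 : 0 < min 1 ((-C1)/(C2+1)) := by
        apply lt_min one_pos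
        apply div_pos (by linarith) (by linarith)
      have ht1 : min 1 ((-C1)/(C2+1)) ≤ 1 := min_le_left _ _
      have hmin2 : min 1 ((-C1)/(C2+1)) ≤ (-C1)/(C2+1) := min_le_right _ _
      have hk := hkey _ ht0 ht1
      have hc2 : min 1 ((-C1)/(C2+1)) * C2 ≤ ((-C1)/(C2+1)) * C2 :=
        mul_le_mul_of_nonneg_right hmin2 hC2
      have h21 : (0:ℝ) < C2 + 1 := by linarith
      have hlt : ((-C1)/(C2+1)) * C2 < -C1 := by
        rw [div_mul_eq_mul_div, div_lt_iff₀ h21]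
        nlinarith
      linarith
    rw [hC1def] at hC1
    linarith
  -- conclude
  obtain ⟨y, v, hv, hge⟩ := hdich (-ub) (-xb)
  have hφval : mphi y v (-ub) (-xb) = -(⟪ub,v⟫) - ⟪xb,y⟫ - ⟪y,v⟫ + ‖ub‖^2/2 + ‖xb‖^2/2 := by
    rw [mphi_def]
    simp only [inner_neg_left, norm_neg]
    ring
  have hnormeq : ‖(-ub) + (-xb)‖ = ‖xb + ub‖ := by
    rw [← neg_add, norm_neg, add_comm]
  rw [hφval, hnormeq] at hge
  have hIII' := hIII y v hv
  have hle0 : ‖xb + ub‖^2/2 ≤ -μ := by linarith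
  have hsumz : ‖xb + ub‖ = 0 := by
    have h := sq_nonneg ‖xb + ub‖
    have h2' : ‖xb + ub‖^2 = 0 := le_antisymm (by linarith) h
    exact (pow_eq_zero_iff two_ne_zero).mp h2'
  have hμz : μ = 0 := by
    have := norm_nonneg (xb + ub)
    nlinarith
  have hsum : xb + ub = 0 := norm_eq_zero.mp hsumz
  have hmemrel : ∀ y' v', v' ∈ A y' → (0:ℝ) ≤ ⟪ub - v', xb - y'⟫ := by
    intro y' v' hv'
    have hφ1 := h1 y' v' hv'
    rw [mphi_alt y' v' xb ub] at hφ1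
    have hnorm : ‖xb + ub‖^2 = ‖xb‖^2 + 2*⟪xb,ub⟫ + ‖ub‖^2 := norm_add_sq_real _ _
    rw [hsumz] at hnorm
    rw [hμz] at hφ1
    nlinarith
  exact ⟨xb, ub, hA.2 xb ub hmemrel, hsum⟩

lemma step_lemma (βE L g ε : ℝ) (hβ : 0 ≤ βE) (hL : 0 ≤ L) (hg : 0 < g)
    (hε0 : 0 < ε) (hε1 : ε < 1)
    (h : g*(βE + Real.sqrt (βE^2 + 16*L^2)) ≤ 4 - ε) :
    g*βE/2 + g^2*L^2 ≤ 1 - ε/4 := by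
  have hA : (0:ℝ) ≤ βE^2 + 16*L^2 := by positivity
  have hR2 := Real.sq_sqrt hA
  have hR0 := Real.sqrt_nonneg (βE^2 + 16*L^2)
  have hR1 : βE ≤ Real.sqrt (βE^2 + 16*L^2) := by nlinarith [sq_nonneg L]
  have h1 : g*Real.sqrt (βE^2 + 16*L^2) ≤ 4 - ε - g*βE := by nlinarith
  have h2 : 0 ≤ g*Real.sqrt (βE^2 + 16*L^2) := mul_nonneg hg.le hR0
  have h3 : (g*Real.sqrt (βE^2 + 16*L^2))^2 = g^2*βE^2 + 16*g^2*L^2 := by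
    rw [mul_pow, hR2]; ring
  have h4 : (g*Real.sqrt (βE^2 + 16*L^2))^2 ≤ (4 - ε - g*βE)^2 := by nlinarith
  have h5 : g*βE ≤ g*Real.sqrt (βE^2 + 16*L^2) := mul_le_mul_of_nonneg_left hR1 hg.le
  have hA2 : 2*(g*βE) ≤ 4 - ε := by linarith
  have hA3 : ε*(2*(g*βE)) ≤ ε*(4 - ε) := mul_le_mul_of_nonneg_left hA2 hε0.le
  nlinarith [h3, h4, hA3]

set_option maxHeartbeats 1000000 in
lemma fejer_step
    (B : H → Set H) (D : H → H) (L_D : ℝ) (hD : ∀ x y : H, ‖D x - D y‖ ≤ L_D * ‖x - y‖)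
    (βE : ℝ) (hβE : 0 ≤ βE) (E : H → H)
    (hE0 : βE = 0 → ∀ x y : H, E x = E y)
    (hEpos : 0 < βE → ∀ x y : H,
      (1 / βE) * ‖E x - E y‖ ^ 2 ≤ ⟪E x - E y, x - y⟫)
    (K : H →L[ℝ] H) (hKskew : ∀ h : H, ⟪K h, h⟫ = 0)
    (hmonoBD : IsMonotoneOp (fun x => (fun u => u + D x) '' B x))
    (Z : Set H) (hZ : Z = {x : H | -(D x + E x + K x) ∈ B x})
    (γk ε : ℝ) (hγk1 : ε ≤ γk) (hγk2 : γk ≤ 1/ε) (hε0 : 0 < ε) (hε1 : ε < 1)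
    (hLD0 : 0 ≤ L_D)
    (hγUBk : γk * (βE + Real.sqrt (βE ^ 2 + 16 * (L_D + ‖K‖) ^ 2)) ≤ 4 - ε)
    (a ah : H) (u : H) (hu : u ∈ B ah)
    (hueq : a - γk • (D a + K a + E a) - ah = γk • u)
    (z : H) (hz : z ∈ Z) :
    ‖(ah - γk • ((D ah + K ah) - (D a + K a))) - z‖^2 ≤
      ‖a - z‖^2 - (ε/4)*‖a - ah‖^2 := by
  have hg0 : 0 < γk := lt_of_lt_of_le hε0 hγk1
  have hK0 : (0:ℝ) ≤ ‖K‖ := norm_nonneg _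
  have hstep : γk*βE/2 + γk^2*(L_D + ‖K‖)^2 ≤ 1 - ε/4 :=
    step_lemma βE (L_D + ‖K‖) γk ε hβE (by linarith) hg0 hε0 hε1 hγUBk
  obtain ⟨d, hd⟩ : ∃ d, d = a - ah := ⟨_, rfl⟩
  obtain ⟨s, hs⟩ : ∃ s, s = (D ah + K ah) - (D a + K a) := ⟨_, rfl⟩
  obtain ⟨e, he⟩ : ∃ e, e = E a - E z := ⟨_, rfl⟩
  obtain ⟨p, hp'⟩ : ∃ p, p = a - z := ⟨_, rfl⟩
  obtain ⟨w, hw⟩ : ∃ w, w = ah - z := ⟨_, rfl⟩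
  have hw2 : w = p - d := by rw [hw, hp', hd]; abel
  -- the monotonicity inequality
  have hzmem : (-(E z + K z)) ∈ (fun u => u + D z) '' B z := by
    rw [hZ] at hz
    exact ⟨-(D z + E z + K z), hz, by abel⟩
  have hbmem : (u + D ah) ∈ (fun u => u + D ah) '' B ah := ⟨u, hu, rfl⟩
  have hmono0 : (0:ℝ) ≤ ⟪u + D ah - -(E z + K z), ah - z⟫ := hmonoBD hbmem hzmem
  have hmono1 : (0:ℝ) ≤ ⟪u, w⟫ + ⟪D ah, w⟫ + ⟪E z, w⟫ + ⟪K z, w⟫ := by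
    have he' : u + D ah - -(E z + K z) = u + D ah + E z + K z := by abel
    rw [he', ← hw] at hmono0
    simp only [inner_add_left] at hmono0
    linarith
  have hgu : γk • u = d - γk • (D a + K a + E a) := by
    rw [hd, ← hueq]; abel
  have hI2 : γk * ⟪u, w⟫ =
      ⟪d, w⟫ - γk * (⟪D a, w⟫ + ⟪K a, w⟫ + ⟪E a, w⟫) := by
    have h := congrArg (fun t : H => (⟪t, w⟫ : ℝ)) hgu
    simp only [real_inner_smul_left, inner_sub_left, inner_add_left] at h
    linarith [h]
  have hKw : ⟪K ah, w⟫ - ⟪K z, w⟫ = 0 := by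
    have h := hKskew w
    rw [hw] at h
    rw [map_sub, inner_sub_left] at h
    rw [hw]
    linarith
  have hsw : ⟪s, w⟫ = ⟪D ah, w⟫ + ⟪K ah, w⟫ - ⟪D a, w⟫ - ⟪K a, w⟫ := by
    rw [hs]
    simp only [inner_sub_left, inner_add_left]
    ring
  have hew : ⟪e, w⟫ = ⟪E a, w⟫ - ⟪E z, w⟫ := by
    rw [he, inner_sub_left]
  have hmono2 : (0:ℝ) ≤ ⟪d, w⟫ + γk * ⟪s, w⟫ - γk * ⟪e, w⟫ := by
    have hγmono := mul_nonneg hg0.le hmono1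
    rw [hsw, hew]
    nlinarith [hI2, hKw]
  -- norm expansion
  have heq1 : ‖(ah - γk • ((D ah + K ah) - (D a + K a))) - z‖^2
      = ‖w‖^2 - 2*γk*⟪w, s⟫ + γk^2*‖s‖^2 := by
    have hx1 : (ah - γk • ((D ah + K ah) - (D a + K a))) - z = w - γk • s := by
      rw [hw, hs]; abel
    rw [hx1, norm_sub_sq_real, real_inner_smul_right, norm_smul, Real.norm_eq_abs,
      abs_of_pos hg0]
    ring
  have heq2 : ‖w‖^2 = ‖p‖^2 - 2*⟪p,d⟫ + ‖d‖^2 := by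
    rw [hw2]; exact norm_sub_sq_real p d
  have hcomm1 : ⟪p, d⟫ = ⟪d, p⟫ := real_inner_comm _ _
  have hcomm2 : ⟪w, s⟫ = ⟪s, w⟫ := real_inner_comm _ _
  have hdw : ⟪d, w⟫ = ⟪d, p⟫ - ‖d‖^2 := by
    rw [hw2, inner_sub_right, real_inner_self_eq_norm_sq]
  have hewp : ⟪e, w⟫ = ⟪e, p⟫ - ⟪e, d⟫ := by
    rw [hw2, inner_sub_right]
  -- cocoercivity bound
  have hEbound : 2*γk*⟪e,d⟫ - 2*γk*⟪e,p⟫ ≤ (γk * βE/2)*‖d‖^2 := by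
    rcases eq_or_lt_of_le hβE with h0 | hpos
    · have hEz : E a = E z := hE0 h0.symm a z
      have he0 : e = 0 := by rw [he, hEz, sub_self]
      rw [he0]
      simp only [inner_zero_left]
      rw [← h0]
      simp
    · have hq4 : (1/βE) * ‖e‖^2 ≤ ⟪e, p⟫ := by
        rw [he, hp']; exact hEpos hpos a z
      have hq5 : ⟪e, d⟫ ≤ ‖e‖ * ‖d‖ := real_inner_le_norm _ _
      have hsq := mul_nonneg hg0.le (sq_nonneg (βE*‖d‖ - 2*‖e‖))
      have hq4' : ‖e‖^2 ≤ βE * ⟪e, p⟫ := by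
        have h6 := mul_le_mul_of_nonneg_left hq4 hpos.le
        have h7 : βE*((1/βE)*‖e‖^2) = ‖e‖^2 := by field_simp
        rw [h7] at h6
        exact h6
      have h8 : 2*γk*βE*⟪e,d⟫ ≤ 2*γk*βE*(‖e‖*‖d‖) :=
        mul_le_mul_of_nonneg_left hq5 (by positivity)
      have h9 : 2*γk*‖e‖^2 ≤ 2*γk*(βE*⟪e,p⟫) :=
        mul_le_mul_of_nonneg_left hq4' (by positivity)
      nlinarith [h8, h9, hsq, hpos]
  -- Lipschitz bound on s
  have hslip : ‖s‖ ≤ (L_D + ‖K‖) * ‖d‖ := by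
    have h1 : ‖D ah - D a‖ ≤ L_D * ‖ah - a‖ := hD ah a
    have h2 : ‖K ah - K a‖ ≤ ‖K‖ * ‖ah - a‖ := by
      rw [← map_sub]; exact K.le_opNorm _
    have h3 : ‖ah - a‖ = ‖d‖ := by rw [hd, norm_sub_rev]
    have h4 : s = (D ah - D a) + (K ah - K a) := by rw [hs]; abel
    calc ‖s‖ ≤ ‖D ah - D a‖ + ‖K ah - K a‖ := by rw [h4]; exact norm_add_le _ _
      _ ≤ L_D * ‖d‖ + ‖K‖ * ‖d‖ := by rw [← h3]; linarith
      _ = (L_D + ‖K‖) * ‖d‖ := by ring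
  have hslip2 : γk^2*‖s‖^2 ≤ γk^2*((L_D + ‖K‖)^2*‖d‖^2) := by
    have := mul_self_le_mul_self (norm_nonneg s) hslip
    have hγ2 : (0:ℝ) ≤ γk^2 := sq_nonneg _
    nlinarith [this]
  have hcoef := mul_le_mul_of_nonneg_right hstep (sq_nonneg ‖d‖)
  -- assemble
  have hgoal : ‖(ah - γk • ((D ah + K ah) - (D a + K a))) - z‖^2 ≤
      ‖p‖^2 - (ε/4)*‖d‖^2 := by
    rw [heq1, heq2]
    nlinarith [hmono2, hdw, hewp, hcomm1, hcomm2, hEbound, hslip2, hcoef]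
  rw [show a - z = p from hp'.symm, show a - ah = d from hd.symm]
  exact hgoal

lemma minty_surj [CompleteSpace H] (A : H → Set H) (hA : IsMaxMonotoneOp A)
    (y₀ v₀ : H) (h₀ : v₀ ∈ A y₀) (z : H) : ∃ x u, u ∈ A x ∧ x + u = z := by
  have hmono : IsMonotoneOp (fun x => (fun u => u - z) '' A x) := by
    rintro x u y v ⟨u', hu', rfl⟩ ⟨v', hv', rfl⟩
    have h := hA.1 hu' hv'
    have : u' - z - (v' - z) = u' - v' := by abel
    rw [this]
    exact h
  have hmax : IsMaxMonotoneOp (fun x => (fun u => u - z) '' A x) := by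
    refine ⟨hmono, ?_⟩
    intro x u hrel
    have hmem : u + z ∈ A x := by
      apply hA.2
      intro y v hv
      have h := hrel y (v - z) ⟨v, hv, rfl⟩
      have heq : u - (v - z) = u + z - v := by abel
      rw [heq] at h
      exact h
    exact ⟨u + z, hmem, add_sub_cancel_right u z⟩
  obtain ⟨x, u, hu, hxu⟩ := minty_zero _ hmax y₀ (v₀ - z) ⟨v₀, h₀, rfl⟩
  obtain ⟨u', hu', rfl⟩ := hu
  refine ⟨x, u', hu', ?_⟩
  have : x + (u' - z) = x + u' - z := by abel
  rw [this] at hxu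
  exact sub_eq_zero.mp hxu

lemma resolvent_exists [CompleteSpace H] (A : H → Set H) (hA : IsMaxMonotoneOp A)
    (y₀ v₀ : H) (h₀ : v₀ ∈ A y₀) (g : ℝ) (hg : 0 < g) (z : H) :
    ∃ x u, u ∈ A x ∧ x + g • u = z := by
  have hmono : IsMonotoneOp (fun x => (g • ·) '' A x) := by
    rintro x u y v ⟨u', hu', rfl⟩ ⟨v', hv', rfl⟩
    have h := hA.1 hu' hv'
    have heq : g • u' - g • v' = g • (u' - v') := by rw [smul_sub]
    rw [heq, real_inner_smul_left]
    exact mul_nonneg hg.le h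
  have hmax : IsMaxMonotoneOp (fun x => (g • ·) '' A x) := by
    refine ⟨hmono, ?_⟩
    intro x u hrel
    have hmem : g⁻¹ • u ∈ A x := by
      apply hA.2
      intro y v hv
      have h := hrel y (g • v) ⟨v, hv, rfl⟩
      have heq : g⁻¹ • u - v = g⁻¹ • (u - g • v) := by
        rw [smul_sub, smul_smul, inv_mul_cancel₀ hg.ne', one_smul]
      rw [heq, real_inner_smul_left]
      exact mul_nonneg (by positivity) h
    refine ⟨g⁻¹ • u, hmem, ?_⟩
    show g • g⁻¹ • u = u
    rw [smul_smul, mul_inv_cancel₀ hg.ne', one_smul]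
  obtain ⟨x, u, hu, hxu⟩ := minty_surj _ hmax y₀ (g • v₀) ⟨v₀, h₀, rfl⟩ z
  obtain ⟨u', hu', rfl⟩ := hu
  exact ⟨x, u', hu', hxu⟩

set_option maxHeartbeats 1000000 in
lemma rel_implies_zer [CompleteSpace H]
    (M : H → Set H) (hM : IsMaxMonotoneOp M) (y₀ v₀ : H) (h₀ : v₀ ∈ M y₀)
    (C : H → H) (L_C : ℝ) (hLC0 : 0 ≤ L_C) (hClip : ∀ a b : H, ‖C a - C b‖ ≤ L_C*‖a - b‖)
    (w : H) (hrel : ∀ p q, q ∈ M p → ⟪C p + q, w - p⟫ ≤ 0) :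
    -C w ∈ M w := by
  obtain ⟨g, hgdef⟩ : ∃ g : ℝ, g = 1/(2*(L_C+1)) := ⟨_, rfl⟩
  have hg0 : 0 < g := by rw [hgdef]; positivity
  have hres : ∀ z : H, ∃ x u, u ∈ M x ∧ x + g • u = z := fun z =>
    resolvent_exists M hM y₀ v₀ h₀ g hg0 z
  choose J q hq hJq using hres
  have hJnon : ∀ z z' : H, ‖J z - J z'‖ ≤ ‖z - z'‖ := by
    intro z z'
    have hmono := hM.1 (hq z) (hq z')
    have hvJ : ∀ t : H, J t = t - g • q t := fun t => eq_sub_of_add_eq (hJq t)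
    have hvec : J z - J z' = (z - z') - g • (q z - q z') := by
      rw [hvJ z, hvJ z', smul_sub]; abel
    have e1 : ‖J z - J z'‖^2 = ⟪z - z', J z - J z'⟫ - g * ⟪q z - q z', J z - J z'⟫ := by
      rw [← real_inner_self_eq_norm_sq]
      nth_rewrite 1 [hvec]
      rw [inner_sub_left, real_inner_smul_left]
    have e2 : ⟪z - z', J z - J z'⟫ ≤ ‖z - z'‖*‖J z - J z'‖ := real_inner_le_norm _ _
    have e3 : 0 ≤ g * ⟪q z - q z', J z - J z'⟫ := mul_nonneg hg0.le hmono
    by_cases hz0 : ‖J z - J z'‖ = 0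
    · rw [hz0]; exact norm_nonneg _
    · have hpos : 0 < ‖J z - J z'‖ := lt_of_le_of_ne (norm_nonneg _) (Ne.symm hz0)
      nlinarith
  obtain ⟨Kc, hKc⟩ : ∃ Kc : NNReal, (Kc : ℝ) = g * L_C := ⟨Real.toNNReal (g*L_C),
    Real.coe_toNNReal _ (by positivity)⟩
  have hKc1 : Kc < 1 := by
    rw [← NNReal.coe_lt_coe, hKc, NNReal.coe_one, hgdef]
    rw [div_mul_eq_mul_div, one_mul, div_lt_one (by positivity)]
    linarith
  have hlip : LipschitzWith Kc (fun p => J (w - g • C p)) := by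
    apply LipschitzWith.of_dist_le_mul
    intro p p'
    rw [dist_eq_norm, dist_eq_norm, hKc]
    calc ‖J (w - g • C p) - J (w - g • C p')‖ ≤ ‖(w - g • C p) - (w - g • C p')‖ :=
          hJnon _ _
      _ = ‖g • (C p' - C p)‖ := by rw [smul_sub]; congr 1; abel
      _ = g * ‖C p' - C p‖ := by rw [norm_smul, Real.norm_eq_abs, abs_of_pos hg0]
      _ ≤ g * (L_C * ‖p' - p‖) := mul_le_mul_of_nonneg_left (hClip p' p) hg0.le
      _ = g * L_C * ‖p - p'‖ := by rw [norm_sub_rev]; ring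
  haveI : Nonempty H := ⟨0⟩
  have hcontr : ContractingWith Kc (fun p => J (w - g • C p)) := ⟨hKc1, hlip⟩
  obtain ⟨pstar, hfix'⟩ : ∃ p : H, J (w - g • C p) = p :=
    ⟨ContractingWith.fixedPoint _ hcontr, hcontr.fixedPoint_isFixedPt⟩
  have hqmem : q (w - g • C pstar) ∈ M pstar := by
    have := hq (w - g • C pstar)
    rwa [hfix'] at this
  have heq : pstar + g • q (w - g • C pstar) = w - g • C pstar := by
    have := hJq (w - g • C pstar)
    rwa [hfix'] at this
  have hvec2 : g • (C pstar + q (w - g • C pstar)) = w - pstar := by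
    rw [smul_add]
    rw [eq_sub_of_add_eq' heq]; abel
  have hip := hrel pstar (q (w - g • C pstar)) hqmem
  have hipeq : g * ⟪C pstar + q (w - g • C pstar), w - pstar⟫ = ‖w - pstar‖^2 := by
    rw [← real_inner_smul_left, hvec2, real_inner_self_eq_norm_sq]
  have hwp : ‖w - pstar‖^2 ≤ 0 := by
    rw [← hipeq]
    exact mul_nonpos_of_nonneg_of_nonpos hg0.le hip
  have hwz : w = pstar := by
    have h1 := sq_nonneg ‖w - pstar‖
    have h2 : ‖w - pstar‖^2 = 0 := le_antisymm hwp h1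
    have h3 : ‖w - pstar‖ = 0 := (pow_eq_zero_iff two_ne_zero).mp h2
    exact sub_eq_zero.mp (norm_eq_zero.mp h3)
  have h5 : w - pstar = 0 := by rw [hwz]; exact sub_self _
  rw [h5] at hvec2
  have h6 : C pstar + q (w - g • C pstar) = 0 :=
    (smul_eq_zero.mp hvec2).resolve_left hg0.ne'
  have h7 : q (w - g • C pstar) = -C pstar := eq_neg_of_add_eq_zero_right h6
  rw [hwz, ← h7]
  exact hqmem

lemma le_of_sq_le_sq' {a b : ℝ} (ha : 0 ≤ a) (hb : 0 ≤ b) (h : a^2 ≤ b^2) : a ≤ b := by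
  rw [← Real.sqrt_sq ha, ← Real.sqrt_sq hb]
  exact Real.sqrt_le_sqrt h


end FourOpHelpers

set_option maxHeartbeats 2000000 in
/-- convergence and local linear convergence of four-operator splitting
with conservative step-length (Algorithm 6), generalizing FBF and FBHF. -/
theorem four_operator_splitting_conservative_convergence
    {H : Type*} [NormedAddCommGroup H] [InnerProductSpace ℝ H] [CompleteSpace H]
    -- Assumption 4
    (B : H → Set H)
    (D : H → H) (L_D : ℝ) (hD : ∀ x y : H, ‖D x - D y‖ ≤ L_D * ‖x - y‖)
    (βE : ℝ) (hβE : 0 ≤ βE)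
    (E : H → H)
    (hE0 : βE = 0 → ∀ x y : H, E x = E y)
    (hEpos : 0 < βE → ∀ x y : H,
      (1 / βE) * ‖E x - E y‖ ^ 2 ≤ inner ℝ (E x - E y) (x - y))
    (K : H →L[ℝ] H) (hK : ContinuousLinearMap.adjoint K = -K)
    (hBD : IsMaxMonotoneOp (fun x => (fun u => u + D x) '' B x))
    (Z : Set H) (hZ : Z = {x : H | -(D x + E x + K x) ∈ B x}) (hzer : Z.Nonempty)
    -- step-sizes
    (γ : ℕ → ℝ) (ε : ℝ) (hε : 0 < ε ∧ ε < 1)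
    (hγ : ∀ k, ε ≤ γ k ∧ γ k ≤ 1 / ε)
    (hγUB : ∀ k,
      γ k * (βE + Real.sqrt (βE ^ 2 + 16 * (L_D + ‖K‖) ^ 2)) ≤ 4 - ε)
    -- the algorithm
    (x xh : ℕ → H)
    (hxh : ∀ k, ∃ u ∈ B (xh k),
      x k - γ k • (D (x k) + K (x k) + E (x k)) - xh k = γ k • u)
    (hupd : ∀ k, x (k + 1) =
      xh k - γ k • ((D (xh k) + K (xh k)) - (D (x k) + K (x k)))) :
    (∃ xbar ∈ Z, WeakConvergesTo x xbar) ∧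
    (FiniteDimensional ℝ H →
      (∃ κ ≥ (0:ℝ), ∃ ν > (0:ℝ), ∃ U : Set H, IsOpen U ∧ Z ⊆ U ∧
        ∀ xx v : H, xx ∈ U → v - D xx - E xx - K xx ∈ B xx → ‖v‖ < ν →
          Metric.infDist xx Z ≤ κ * ‖v‖) →
      ∃ (K₀ : ℕ) (c R : ℝ), 0 ≤ c ∧ c < 1 ∧ 0 ≤ R ∧
        ∃ xbar ∈ Z, ∀ k ≥ K₀,
          Metric.infDist (x (k + 1)) Z ≤ c * Metric.infDist (x k) Z ∧
          ‖x k - xbar‖ ≤ R * c ^ k) := by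
  classical
  obtain ⟨hε0, hε1⟩ := hε
  obtain ⟨z₀, hz₀⟩ := hzer
  rcases subsingleton_or_nontrivial H with hsub | hnt
  · -- trivial Hilbert space
    have hxz : ∀ k, x k = z₀ := fun k => Subsingleton.elim _ _
    constructor
    · refine ⟨z₀, hz₀, fun y => ?_⟩
      have hfe : (fun k => (⟪x k, y⟫ : ℝ)) = fun _ => ⟪z₀, y⟫ :=
        funext fun k => by rw [hxz k]
      rw [hfe]
      exact tendsto_const_nhds
    · intro _ _
      refine ⟨0, 1/2, 0, by norm_num, by norm_num, le_refl 0, z₀, hz₀, fun k _ => ?_⟩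
      constructor
      · have h1 : x (k+1) ∈ Z := (hxz (k+1)) ▸ hz₀
        have h2 : x k ∈ Z := (hxz k) ▸ hz₀
        rw [Metric.infDist_zero_of_mem h1, Metric.infDist_zero_of_mem h2]
        norm_num
      · rw [hxz k, sub_self, norm_zero]
        positivity
  -- nontrivial case
  have hLD0 : 0 ≤ L_D := by
    obtain ⟨a, b, hab⟩ := exists_pair_ne H
    have h1 := hD a b
    have h2 : 0 < ‖a - b‖ := by rwa [norm_pos_iff, sub_ne_zero]
    nlinarith [norm_nonneg (D a - D b)]
  have hK0 : (0:ℝ) ≤ ‖K‖ := norm_nonneg _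
  have hγpos : ∀ k, 0 < γ k := fun k => lt_of_lt_of_le hε0 (hγ k).1
  have hKskew : ∀ h : H, (⟪K h, h⟫ : ℝ) = 0 := by
    intro h
    have h2 := ContinuousLinearMap.adjoint_inner_right K h h
    rw [hK, ContinuousLinearMap.neg_apply, inner_neg_right] at h2
    have h3 : (⟪h, K h⟫ : ℝ) = ⟪K h, h⟫ := real_inner_comm _ _
    linarith
  have hElip : ∀ a b : H, ‖E a - E b‖ ≤ βE * ‖a - b‖ := by
    intro a b
    rcases eq_or_lt_of_le hβE with h0 | hpos
    · rw [hE0 h0.symm a b, sub_self, norm_zero]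
      exact mul_nonneg hβE (norm_nonneg _)
    · have h1 := hEpos hpos a b
      have h2 : (⟪E a - E b, a - b⟫ : ℝ) ≤ ‖E a - E b‖*‖a - b‖ := real_inner_le_norm _ _
      by_cases h3 : ‖E a - E b‖ = 0
      · rw [h3]
        exact mul_nonneg hpos.le (norm_nonneg _)
      · have h4 : 0 < ‖E a - E b‖ := lt_of_le_of_ne (norm_nonneg _) (Ne.symm h3)
        have h6 : ‖E a - E b‖^2 ≤ βE * ⟪E a - E b, a - b⟫ := by
          have h7 := mul_le_mul_of_nonneg_left h1 hpos.le
          have h8 : βE*((1/βE)*‖E a - E b‖^2) = ‖E a - E b‖^2 := by field_simp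
          rw [h8] at h7
          exact h7
        nlinarith [mul_le_mul_of_nonneg_left h2 hβE]
  have hEmono : ∀ a b : H, (0:ℝ) ≤ ⟪E a - E b, a - b⟫ := by
    intro a b
    rcases eq_or_lt_of_le hβE with h0 | hpos
    · rw [hE0 h0.symm a b, sub_self, inner_zero_left]
    · have h1 := hEpos hpos a b
      have := sq_nonneg ‖E a - E b‖
      have h5 : (0:ℝ) < 1/βE := by positivity
      nlinarith
  have hCElip : ∀ a b : H, ‖(E a + K a) - (E b + K b)‖ ≤ (βE + ‖K‖) * ‖a - b‖ := by
    intro a b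
    have h1 : (E a + K a) - (E b + K b) = (E a - E b) + (K a - K b) := by abel
    have h2 : ‖K a - K b‖ ≤ ‖K‖ * ‖a - b‖ := by
      rw [← map_sub]; exact K.le_opNorm _
    calc ‖(E a + K a) - (E b + K b)‖ ≤ ‖E a - E b‖ + ‖K a - K b‖ := by
          rw [h1]; exact norm_add_le _ _
      _ ≤ βE * ‖a - b‖ + ‖K‖ * ‖a - b‖ := add_le_add (hElip a b) h2
      _ = (βE + ‖K‖) * ‖a - b‖ := by ring
  have hCmono : ∀ a b : H, (0:ℝ) ≤ ⟪(E a + K a) - (E b + K b), a - b⟫ := by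
    intro a b
    have h1 : (E a + K a) - (E b + K b) = (E a - E b) + (K a - K b) := by abel
    have h2 : (⟪K a - K b, a - b⟫ : ℝ) = 0 := by rw [← map_sub]; exact hKskew _
    rw [h1, inner_add_left, h2]
    have := hEmono a b
    linarith
  have hzmem : ∀ z ∈ Z, -(E z + K z) ∈ (fun u => u + D z) '' B z := by
    intro z hz
    rw [hZ] at hz
    exact ⟨-(D z + E z + K z), hz, by abel⟩
  choose u hu hueq using hxh
  -- Fejér inequality
  have hfejer : ∀ z ∈ Z, ∀ k,
      ‖x (k+1) - z‖^2 ≤ ‖x k - z‖^2 - (ε/4)*‖x k - xh k‖^2 := by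
    intro z hz k
    have h := fejer_step B D L_D hD βE hβE E hE0 hEpos K hKskew hBD.1 Z hZ
      (γ k) ε (hγ k).1 (hγ k).2 hε0 hε1 hLD0 (hγUB k) (x k) (xh k) (u k) (hu k)
      (hueq k) z hz
    rw [← hupd k] at h
    exact h
  have hdec : ∀ z ∈ Z, ∀ k, ‖x (k+1) - z‖ ≤ ‖x k - z‖ := by
    intro z hz k
    have h1 := hfejer z hz k
    have h2 : (0:ℝ) ≤ (ε/4)*‖x k - xh k‖^2 := by positivity
    exact le_of_sq_le_sq' (norm_nonneg _) (norm_nonneg _) (by linarith)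
  have hmonoseq : ∀ z ∈ Z, Antitone fun k => ‖x k - z‖ := fun z hz =>
    antitone_nat_of_succ_le (hdec z hz)
  have hbddx : ∀ k, ‖x k - z₀‖ ≤ ‖x 0 - z₀‖ := fun k => hmonoseq z₀ hz₀ (Nat.zero_le k)
  have hMx : ∀ k, ‖x k‖ ≤ ‖x 0 - z₀‖ + ‖z₀‖ := by
    intro k
    have h1 : x k = (x k - z₀) + z₀ := by abel
    calc ‖x k‖ = ‖(x k - z₀) + z₀‖ := by rw [← h1]
      _ ≤ ‖x k - z₀‖ + ‖z₀‖ := norm_add_le _ _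
      _ ≤ ‖x 0 - z₀‖ + ‖z₀‖ := by linarith [hbddx k]
  -- summability of the squared corrections
  have hsumd : ∀ n : ℕ, (ε/4) * (∑ j ∈ Finset.range n, ‖x j - xh j‖^2) ≤
      ‖x 0 - z₀‖^2 - ‖x n - z₀‖^2 := by
    intro n
    induction n with
    | zero => simp
    | succ n ih =>
      rw [Finset.sum_range_succ, mul_add]
      have := hfejer z₀ hz₀ n
      linarith
  have hd2sum : Summable fun k => ‖x k - xh k‖^2 := by
    apply summable_of_sum_range_le (c := (4/ε)*‖x 0 - z₀‖^2) (fun k => sq_nonneg _)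
    intro n
    have h1 := hsumd n
    have h2 := sq_nonneg ‖x n - z₀‖
    have h4e : (ε/4) * ((4/ε)*‖x 0 - z₀‖^2) = ‖x 0 - z₀‖^2 := by field_simp
    nlinarith [Finset.sum_nonneg (fun j (_ : j ∈ Finset.range n) => sq_nonneg ‖x j - xh j‖),
      mul_pos hε0 (by norm_num : (0:ℝ) < 1/4)]
  have hdto0 : Tendsto (fun k => ‖x k - xh k‖) atTop (𝓝 0) := by
    have h2 := hd2sum.tendsto_atTop_zero
    have h4 := (Real.continuous_sqrt.tendsto 0).comp h2
    rw [Real.sqrt_zero] at h4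
    refine h4.congr fun k => ?_
    exact Real.sqrt_sq (norm_nonneg _)
  -- uniform bound on the corrections
  have hd_le : ∀ k, ‖x k - xh k‖^2 ≤ (4/ε)*‖x 0 - z₀‖^2 := by
    intro k
    have h1 := hfejer z₀ hz₀ k
    have h2 := sq_nonneg ‖x (k+1) - z₀‖
    have h3 := hbddx k
    have h4 : ‖x k - z₀‖^2 ≤ ‖x 0 - z₀‖^2 := by
      nlinarith [norm_nonneg (x k - z₀), norm_nonneg (x 0 - z₀)]
    have h4e : (ε/4) * ((4/ε)*‖x 0 - z₀‖^2) = ‖x 0 - z₀‖^2 := by field_simp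
    nlinarith
  have hMxh : ∀ k, ‖xh k‖ ≤ (‖x 0 - z₀‖ + ‖z₀‖) + Real.sqrt ((4/ε)*‖x 0 - z₀‖^2) := by
    intro k
    have h1 : ‖x k - xh k‖ ≤ Real.sqrt ((4/ε)*‖x 0 - z₀‖^2) := by
      have := Real.sqrt_le_sqrt (hd_le k)
      rwa [Real.sqrt_sq (norm_nonneg _)] at this
    have h2 : xh k = x k - (x k - xh k) := by abel
    calc ‖xh k‖ = ‖x k - (x k - xh k)‖ := by rw [← h2]
      _ ≤ ‖x k‖ + ‖x k - xh k‖ := norm_sub_le _ _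
      _ ≤ (‖x 0 - z₀‖ + ‖z₀‖) + Real.sqrt ((4/ε)*‖x 0 - z₀‖^2) :=
          add_le_add (hMx k) h1
  -- the residual vector and its bound
  have hvv : ∀ k, ‖u k + (D (xh k) + E (xh k) + K (xh k))‖ ≤
      (1/ε + (L_D + βE + ‖K‖)) * ‖x k - xh k‖ := by
    intro k
    have hgu : u k = (γ k)⁻¹ • (x k - xh k) - (D (x k) + K (x k) + E (x k)) := by
      have h1 : γ k • u k = (x k - xh k) - γ k • (D (x k) + K (x k) + E (x k)) := by
        rw [← hueq k]; abel
      have h2 : u k = (γ k)⁻¹ • ((x k - xh k) - γ k • (D (x k) + K (x k) + E (x k))) := by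
        rw [← h1, smul_smul, inv_mul_cancel₀ (hγpos k).ne', one_smul]
      rw [h2, smul_sub, smul_smul, inv_mul_cancel₀ (hγpos k).ne', one_smul]
    have hvec : u k + (D (xh k) + E (xh k) + K (xh k)) =
        (γ k)⁻¹ • (x k - xh k) + ((D (xh k) - D (x k)) + ((E (xh k) - E (x k))
          + (K (xh k) - K (x k)))) := by
      rw [hgu]; abel
    have h1 : ‖(γ k)⁻¹ • (x k - xh k)‖ ≤ (1/ε)*‖x k - xh k‖ := by
      rw [norm_smul, Real.norm_eq_abs, abs_of_pos (inv_pos.mpr (hγpos k))]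
      have : (γ k)⁻¹ ≤ ε⁻¹ := inv_anti₀ hε0 (hγ k).1
      have h2 : (1:ℝ)/ε = ε⁻¹ := one_div ε
      rw [h2]
      exact mul_le_mul_of_nonneg_right this (norm_nonneg _)
    have h2 : ‖D (xh k) - D (x k)‖ ≤ L_D * ‖x k - xh k‖ := by
      rw [show ‖x k - xh k‖ = ‖xh k - x k‖ from norm_sub_rev _ _]
      exact hD _ _
    have h3 : ‖E (xh k) - E (x k)‖ ≤ βE * ‖x k - xh k‖ := by
      rw [show ‖x k - xh k‖ = ‖xh k - x k‖ from norm_sub_rev _ _]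
      exact hElip _ _
    have h4 : ‖K (xh k) - K (x k)‖ ≤ ‖K‖ * ‖x k - xh k‖ := by
      rw [show ‖x k - xh k‖ = ‖xh k - x k‖ from norm_sub_rev _ _, ← map_sub]
      exact K.le_opNorm _
    calc ‖u k + (D (xh k) + E (xh k) + K (xh k))‖
        = ‖(γ k)⁻¹ • (x k - xh k) + ((D (xh k) - D (x k)) + ((E (xh k) - E (x k))
          + (K (xh k) - K (x k))))‖ := by rw [← hvec]
      _ ≤ ‖(γ k)⁻¹ • (x k - xh k)‖ + (‖D (xh k) - D (x k)‖ + (‖E (xh k) - E (x k)‖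
          + ‖K (xh k) - K (x k)‖)) := by
            refine (norm_add_le _ _).trans ?_
            gcongr
            refine (norm_add_le _ _).trans ?_
            gcongr
            exact norm_add_le _ _
      _ ≤ (1/ε)*‖x k - xh k‖ + (L_D*‖x k - xh k‖ + (βE*‖x k - xh k‖
          + ‖K‖*‖x k - xh k‖)) := by gcongr <;> assumption
      _ = (1/ε + (L_D + βE + ‖K‖)) * ‖x k - xh k‖ := by ring
  -- every weak cluster point (along an ultrafilter refining atTop) lies in Z
  have hclusterZ : ∀ (U : Ultrafilter ℕ), (U : Filter ℕ) ≤ atTop → ∀ w : H,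
      (∀ y, Tendsto (fun k => (⟪x k, y⟫ : ℝ)) U (𝓝 ⟪w, y⟫)) → w ∈ Z := by
    intro U hUle w hw
    have hrelw : ∀ p q, q ∈ (fun t => (fun v => v + D t) '' B t) p →
        (⟪(E p + K p) + q, w - p⟫ : ℝ) ≤ 0 := by
      intro p q hq'
      -- pointwise inequality
      have hptwise : ∀ k, (⟪(E p + K p) + q, xh k - p⟫ : ℝ) ≤
          ((1/ε + (L_D + βE + ‖K‖)) * ‖x k - xh k‖) *
            (((‖x 0 - z₀‖ + ‖z₀‖) + Real.sqrt ((4/ε)*‖x 0 - z₀‖^2)) + ‖p‖) := by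
        intro k
        have hmono1 := hBD.1 (⟨u k, hu k, rfl⟩ :
          u k + D (xh k) ∈ (fun v => v + D (xh k)) '' B (xh k)) hq'
        have hmono2 := hCmono (xh k) p
        -- 0 ≤ ⟪(u k + D xh k) - q, xh k - p⟫ ; 0 ≤ ⟪(E xh + K xh) - (E p + K p), xh k - p⟫
        have hsum : (⟪(E p + K p) + q, xh k - p⟫ : ℝ) ≤
            ⟪u k + (D (xh k) + E (xh k) + K (xh k)), xh k - p⟫ := by
          have e1 : (⟪(u k + D (xh k)) - q, xh k - p⟫ : ℝ)
              = ⟪u k + D (xh k), xh k - p⟫ - ⟪q, xh k - p⟫ := inner_sub_left _ _ _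
          have e2 : (⟪(E (xh k) + K (xh k)) - (E p + K p), xh k - p⟫ : ℝ)
              = ⟪E (xh k) + K (xh k), xh k - p⟫ - ⟪E p + K p, xh k - p⟫ :=
            inner_sub_left _ _ _
          have e3 : (⟪(E p + K p) + q, xh k - p⟫ : ℝ)
              = ⟪E p + K p, xh k - p⟫ + ⟪q, xh k - p⟫ := inner_add_left _ _ _
          have e4 : (⟪u k + (D (xh k) + E (xh k) + K (xh k)), xh k - p⟫ : ℝ)
              = ⟪u k + D (xh k), xh k - p⟫ + ⟪E (xh k) + K (xh k), xh k - p⟫ := by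
            rw [← inner_add_left]
            congr 1
            abel
          rw [e1] at hmono1
          rw [e2] at hmono2
          rw [e3, e4]
          linarith
        have hCS : (⟪u k + (D (xh k) + E (xh k) + K (xh k)), xh k - p⟫ : ℝ) ≤
            ‖u k + (D (xh k) + E (xh k) + K (xh k))‖ * ‖xh k - p‖ :=
          real_inner_le_norm _ _
        have hnp : ‖xh k - p‖ ≤ ((‖x 0 - z₀‖ + ‖z₀‖) + Real.sqrt ((4/ε)*‖x 0 - z₀‖^2)) + ‖p‖ := by
          calc ‖xh k - p‖ ≤ ‖xh k‖ + ‖p‖ := norm_sub_le _ _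
            _ ≤ _ := by gcongr; exact hMxh k
        have hprod : ‖u k + (D (xh k) + E (xh k) + K (xh k))‖ * ‖xh k - p‖ ≤
            ((1/ε + (L_D + βE + ‖K‖)) * ‖x k - xh k‖) *
              (((‖x 0 - z₀‖ + ‖z₀‖) + Real.sqrt ((4/ε)*‖x 0 - z₀‖^2)) + ‖p‖) := by
          apply mul_le_mul (hvv k) hnp (norm_nonneg _)
          positivity
        linarith
      -- limits
      have hRlim : Tendsto (fun k => ((1/ε + (L_D + βE + ‖K‖)) * ‖x k - xh k‖) *
          (((‖x 0 - z₀‖ + ‖z₀‖) + Real.sqrt ((4/ε)*‖x 0 - z₀‖^2)) + ‖p‖)) U (𝓝 0) := by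
        have h1 : Tendsto (fun k => ((1/ε + (L_D + βE + ‖K‖)) * ‖x k - xh k‖) *
            (((‖x 0 - z₀‖ + ‖z₀‖) + Real.sqrt ((4/ε)*‖x 0 - z₀‖^2)) + ‖p‖)) atTop
            (𝓝 (((1/ε + (L_D + βE + ‖K‖)) * 0) *
            (((‖x 0 - z₀‖ + ‖z₀‖) + Real.sqrt ((4/ε)*‖x 0 - z₀‖^2)) + ‖p‖))) :=
          ((hdto0.const_mul _).mul_const _)
        rw [mul_zero, zero_mul] at h1
        exact h1.mono_left hUle
      have hLlim : Tendsto (fun k => (⟪(E p + K p) + q, xh k - p⟫ : ℝ)) U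
          (𝓝 (⟪(E p + K p) + q, w - p⟫ : ℝ)) := by
        have hxk : Tendsto (fun k => (⟪(E p + K p) + q, x k⟫ : ℝ)) U
            (𝓝 ⟪(E p + K p) + q, w⟫) := by
          have h1 := hw ((E p + K p) + q)
          have h2 : ∀ z' : H, (⟪z', (E p + K p) + q⟫ : ℝ) = ⟪(E p + K p) + q, z'⟫ :=
            fun z' => real_inner_comm _ _
          have h3 : (fun k => (⟪(E p + K p) + q, x k⟫ : ℝ))
              = fun k => ⟪x k, (E p + K p) + q⟫ := funext fun k => (h2 (x k)).symm
          rw [h3, ← h2 w]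
          exact h1
        have hdk : Tendsto (fun k => (⟪(E p + K p) + q, x k - xh k⟫ : ℝ)) U (𝓝 0) := by
          have hb : ∀ k, |(⟪(E p + K p) + q, x k - xh k⟫ : ℝ)| ≤
              ‖(E p + K p) + q‖ * ‖x k - xh k‖ := fun k => abs_real_inner_le_norm _ _
          have h0 : Tendsto (fun k => ‖(E p + K p) + q‖ * ‖x k - xh k‖) atTop (𝓝 0) := by
            have := hdto0.const_mul ‖(E p + K p) + q‖
            rwa [mul_zero] at this
          have := squeeze_zero_norm (fun k => by
            rw [Real.norm_eq_abs]; exact hb k) h0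
          exact this.mono_left hUle
        have hcomb : Tendsto (fun k => (⟪(E p + K p) + q, x k⟫ : ℝ)
            - ⟪(E p + K p) + q, x k - xh k⟫ - ⟪(E p + K p) + q, p⟫) U
            (𝓝 (⟪(E p + K p) + q, w⟫ - 0 - ⟪(E p + K p) + q, p⟫)) :=
          (hxk.sub hdk).sub tendsto_const_nhds
        have heqf : ∀ k, (⟪(E p + K p) + q, x k⟫ : ℝ)
            - ⟪(E p + K p) + q, x k - xh k⟫ - ⟪(E p + K p) + q, p⟫
            = ⟪(E p + K p) + q, xh k - p⟫ := by
          intro k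
          rw [inner_sub_right, inner_sub_right]
          ring
        have heqL : (⟪(E p + K p) + q, w⟫ : ℝ) - 0 - ⟪(E p + K p) + q, p⟫
            = ⟪(E p + K p) + q, w - p⟫ := by
          rw [inner_sub_right]; ring
        rw [heqL] at hcomb
        exact hcomb.congr heqf
      exact le_of_tendsto_of_tendsto' hLlim hRlim hptwise
    -- apply the Minty machinery
    have hres := rel_implies_zer (fun t => (fun v => v + D t) '' B t) hBD
      z₀ (-(E z₀ + K z₀)) (hzmem z₀ hz₀) (fun t => E t + K t) (βE + ‖K‖)
      (by positivity) hCElip w hrelw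
    obtain ⟨b, hbB, hbeq⟩ := hres
    rw [hZ]
    simp only [Set.mem_setOf_eq]
    have hb' : b = -(D w + E w + K w) := by
      have h1 : b + D w = -(E w + K w) := hbeq
      have h2 : b = -(E w + K w) - D w := eq_sub_of_add_eq h1
      rw [h2]; abel
    rw [← hb']
    exact hbB
  -- weak limit along a fixed ultrafilter
  have hUbase : ((Ultrafilter.of atTop : Ultrafilter ℕ) : Filter ℕ) ≤ atTop :=
    Ultrafilter.of_le _
  obtain ⟨wb, hwbM, hwb⟩ := weak_limit_ultra (Ultrafilter.of atTop) x
    (‖x 0 - z₀‖ + ‖z₀‖) hMx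
  have hwbZ : wb ∈ Z := hclusterZ _ hUbase wb hwb
  -- uniqueness of weak cluster points in Z
  have hlimnorm : ∀ z ∈ Z, ∃ l, Tendsto (fun k => ‖x k - z‖) atTop (𝓝 l) := by
    intro z hz
    refine ⟨_, tendsto_atTop_ciInf (hmonoseq z hz) ⟨0, ?_⟩⟩
    rintro a ⟨k, rfl⟩
    exact norm_nonneg _
  have huniq : ∀ (U1 U2 : Ultrafilter ℕ), (U1 : Filter ℕ) ≤ atTop →
      (U2 : Filter ℕ) ≤ atTop → ∀ w1 w2 : H,
      (∀ y, Tendsto (fun k => (⟪x k, y⟫ : ℝ)) U1 (𝓝 ⟪w1, y⟫)) →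
      (∀ y, Tendsto (fun k => (⟪x k, y⟫ : ℝ)) U2 (𝓝 ⟪w2, y⟫)) →
      w1 ∈ Z → w2 ∈ Z → w1 = w2 := by
    intro U1 U2 hU1 hU2 w1 w2 hw1 hw2 hw1Z hw2Z
    obtain ⟨l1, hl1⟩ := hlimnorm w1 hw1Z
    obtain ⟨l2, hl2⟩ := hlimnorm w2 hw2Z
    have hc : Tendsto (fun k => ‖x k - w1‖^2 - ‖x k - w2‖^2) atTop
        (𝓝 (l1^2 - l2^2)) := (hl1.pow 2).sub (hl2.pow 2)
    have hid : ∀ k, ‖x k - w1‖^2 - ‖x k - w2‖^2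
        = -2*(⟪x k, w1 - w2⟫ : ℝ) + (‖w1‖^2 - ‖w2‖^2) := by
      intro k
      have e1 := norm_sub_sq_real (x k) w1
      have e2 := norm_sub_sq_real (x k) w2
      have e3 : (⟪x k, w1 - w2⟫ : ℝ) = ⟪x k, w1⟫ - ⟪x k, w2⟫ := inner_sub_right _ _ _
      linarith
    have hval : ∀ (U : Ultrafilter ℕ), (U : Filter ℕ) ≤ atTop → ∀ wv : H,
        (∀ y, Tendsto (fun k => (⟪x k, y⟫ : ℝ)) U (𝓝 ⟪wv, y⟫)) →
        -2*(⟪wv, w1 - w2⟫ : ℝ) + (‖w1‖^2 - ‖w2‖^2) = l1^2 - l2^2 := by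
      intro U hUle wv hwv
      have h1 : Tendsto (fun k => -2*(⟪x k, w1 - w2⟫ : ℝ) + (‖w1‖^2 - ‖w2‖^2)) U
          (𝓝 (-2*(⟪wv, w1 - w2⟫ : ℝ) + (‖w1‖^2 - ‖w2‖^2))) :=
        ((hwv (w1 - w2)).const_mul (-2)).add tendsto_const_nhds
      have h2 : Tendsto (fun k => -2*(⟪x k, w1 - w2⟫ : ℝ) + (‖w1‖^2 - ‖w2‖^2)) U
          (𝓝 (l1^2 - l2^2)) := by
        refine Tendsto.congr (fun k => hid k) ?_
        exact (hc.mono_left hUle)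
      exact tendsto_nhds_unique h1 h2
    have ha1 := hval U1 hU1 w1 hw1
    have ha2 := hval U2 hU2 w2 hw2
    have h3 : (⟪w1, w1 - w2⟫ : ℝ) = ⟪w2, w1 - w2⟫ := by linarith
    have h4 : (⟪w1 - w2, w1 - w2⟫ : ℝ) = 0 := by
      rw [inner_sub_left]
      linarith
    rw [real_inner_self_eq_norm_sq] at h4
    have h5 : ‖w1 - w2‖ = 0 := (pow_eq_zero_iff two_ne_zero).mp h4
    exact sub_eq_zero.mp (norm_eq_zero.mp h5)
  -- weak convergence of the full sequence
  have hweakconv : WeakConvergesTo x wb := by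
    intro y
    by_contra hcon
    rw [Metric.tendsto_atTop] at hcon
    push_neg at hcon
    obtain ⟨δ, hδ0, hfreq⟩ := hcon
    have hNeBot : (atTop ⊓ 𝓟 {k | δ ≤ dist (⟪x k, y⟫ : ℝ) (⟪wb, y⟫ : ℝ)}).NeBot := by
      rw [Filter.inf_principal_neBot_iff]
      intro t ht
      rw [Filter.mem_atTop_sets] at ht
      obtain ⟨N, hN⟩ := ht
      obtain ⟨n, hn, hdist⟩ := hfreq N
      exact ⟨n, hN n hn, hdist⟩
    have hU'le2 : ((Ultrafilter.of (atTop ⊓ 𝓟 {k | δ ≤ dist (⟪x k, y⟫ : ℝ) (⟪wb, y⟫ : ℝ)})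
        : Ultrafilter ℕ) : Filter ℕ) ≤ atTop ⊓ 𝓟 _ := Ultrafilter.of_le _
    have hU'le : ((Ultrafilter.of (atTop ⊓ 𝓟 {k | δ ≤ dist (⟪x k, y⟫ : ℝ) (⟪wb, y⟫ : ℝ)})
        : Ultrafilter ℕ) : Filter ℕ) ≤ atTop := hU'le2.trans inf_le_left
    obtain ⟨w', hw'M, hw'⟩ := weak_limit_ultra
      (Ultrafilter.of (atTop ⊓ 𝓟 {k | δ ≤ dist (⟪x k, y⟫ : ℝ) (⟪wb, y⟫ : ℝ)})) x
      (‖x 0 - z₀‖ + ‖z₀‖) hMx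
    have hw'Z : w' ∈ Z := hclusterZ _ hU'le w' hw'
    have hww : w' = wb := huniq _ _ hU'le hUbase w' wb hw' hwb hw'Z hwbZ
    have htend : Tendsto (fun k => (⟪x k, y⟫ : ℝ))
        (Ultrafilter.of (atTop ⊓ 𝓟 {k | δ ≤ dist (⟪x k, y⟫ : ℝ) (⟪wb, y⟫ : ℝ)}))
        (𝓝 (⟪wb, y⟫ : ℝ)) := hww ▸ hw' y
    have hSmem : {k | δ ≤ dist (⟪x k, y⟫ : ℝ) (⟪wb, y⟫ : ℝ)} ∈
        Ultrafilter.of (atTop ⊓ 𝓟 {k | δ ≤ dist (⟪x k, y⟫ : ℝ) (⟪wb, y⟫ : ℝ)}) :=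
      hU'le2 (Filter.mem_inf_of_right (Filter.mem_principal_self _))
    have hev := Metric.tendsto_nhds.mp htend δ hδ0
    have hbad : ∀ᶠ k in (Ultrafilter.of (atTop ⊓ 𝓟 {k | δ ≤ dist (⟪x k, y⟫ : ℝ)
        (⟪wb, y⟫ : ℝ)}) : Filter ℕ), False := by
      filter_upwards [hev, hSmem] with k h1 h2
      exact absurd h1 (not_lt.mpr h2)
    obtain ⟨k, hk⟩ := hbad.exists
    exact hk
  refine ⟨⟨wb, hwbZ, hweakconv⟩, ?_⟩
  -- PART 2 : local linear convergence
  intro hfd hreg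
  obtain ⟨κ, hκ0, ν, hν0, Uo, hUopen, hZU, hsubreg⟩ := hreg
  haveI := hfd
  haveI : ProperSpace H := FiniteDimensional.proper_real H
  -- strong convergence in finite dimensions
  have hstrong : Tendsto x atTop (𝓝 wb) := by
    have hrepr : ∀ v : H, ∑ i, ((⟪(stdOrthonormalBasis ℝ H) i, v⟫ : ℝ)) •
        (stdOrthonormalBasis ℝ H) i = v := fun v => (stdOrthonormalBasis ℝ H).sum_repr' v
    have hsumtend : Tendsto (fun k => ∑ i, ((⟪(stdOrthonormalBasis ℝ H) i, x k⟫ : ℝ)) •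
        (stdOrthonormalBasis ℝ H) i) atTop
        (𝓝 (∑ i, ((⟪(stdOrthonormalBasis ℝ H) i, wb⟫ : ℝ)) • (stdOrthonormalBasis ℝ H) i)) := by
      apply tendsto_finset_sum
      intro i _
      have h1 := hweakconv ((stdOrthonormalBasis ℝ H) i)
      have h2 : Tendsto (fun k => ((⟪(stdOrthonormalBasis ℝ H) i, x k⟫ : ℝ))) atTop
          (𝓝 (⟪(stdOrthonormalBasis ℝ H) i, wb⟫ : ℝ)) := by
        rw [show ((⟪(stdOrthonormalBasis ℝ H) i, wb⟫ : ℝ))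
          = ⟪wb, (stdOrthonormalBasis ℝ H) i⟫ from real_inner_comm _ _]
        exact h1.congr fun k => real_inner_comm _ _
      exact h2.smul_const _
    rw [hrepr wb] at hsumtend
    exact hsumtend.congr fun k => hrepr (x k)
  have hdvec : Tendsto (fun k => x k - xh k) atTop (𝓝 0) :=
    tendsto_zero_iff_norm_tendsto_zero.mpr hdto0
  have hxhto : Tendsto xh atTop (𝓝 wb) := by
    have h1 := hstrong.sub hdvec
    rw [sub_zero] at h1
    exact h1.congr fun k => by abel
  have hev1 : ∀ᶠ k in atTop, xh k ∈ Uo := hxhto (hUopen.mem_nhds (hZU hwbZ))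
  have hev2 : ∀ᶠ k in atTop, (1/ε + (L_D + βE + ‖K‖)) * ‖x k - xh k‖ < ν := by
    have h1 := hdto0.const_mul (1/ε + (L_D + βE + ‖K‖))
    rw [mul_zero] at h1
    exact h1.eventually_lt_const hν0
  obtain ⟨K₀, hK₀⟩ := (hev1.and hev2).exists_forall_of_atTop
  -- Z is closed
  have hZrel : ∀ z ∈ Z, ∀ p q, q ∈ (fun t => (fun v => v + D t) '' B t) p →
      (⟪(E p + K p) + q, z - p⟫ : ℝ) ≤ 0 := by
    intro z hz p q hq'
    have h1 := hBD.1 (hzmem z hz) hq'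
    have h2 := hCmono z p
    have e1 : (⟪-(E z + K z) - q, z - p⟫ : ℝ)
        = -⟪E z + K z, z - p⟫ - ⟪q, z - p⟫ := by
      rw [sub_eq_add_neg, inner_add_left, inner_neg_left, inner_neg_left]; ring
    have e2 : (⟪(E z + K z) - (E p + K p), z - p⟫ : ℝ)
        = ⟪E z + K z, z - p⟫ - ⟪E p + K p, z - p⟫ := inner_sub_left _ _ _
    have e3 : (⟪(E p + K p) + q, z - p⟫ : ℝ)
        = ⟪E p + K p, z - p⟫ + ⟪q, z - p⟫ := inner_add_left _ _ _
    rw [e1] at h1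
    rw [e2] at h2
    rw [e3]
    linarith
  have hZchar : Z = {w : H | ∀ p q, q ∈ (fun t => (fun v => v + D t) '' B t) p →
      (⟪(E p + K p) + q, w - p⟫ : ℝ) ≤ 0} := by
    ext w
    simp only [Set.mem_setOf_eq]
    constructor
    · intro hw p q hq'
      exact hZrel w hw p q hq'
    · intro hw
      have hres := rel_implies_zer (fun t => (fun v => v + D t) '' B t) hBD z₀
        (-(E z₀ + K z₀)) (hzmem z₀ hz₀) (fun t => E t + K t) (βE + ‖K‖) (by positivity)
        hCElip w hw
      obtain ⟨b', hbB, hbeq⟩ := hres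
      rw [hZ]
      simp only [Set.mem_setOf_eq]
      have hb' : b' = -(D w + E w + K w) := by
        have h2 : b' = -(E w + K w) - D w := eq_sub_of_add_eq hbeq
        rw [h2]; abel
      rw [← hb']
      exact hbB
  have hZclosed : IsClosed Z := by
    rw [hZchar]
    have heq : {w : H | ∀ p q, q ∈ (fun t => (fun v => v + D t) '' B t) p →
        (⟪(E p + K p) + q, w - p⟫ : ℝ) ≤ 0}
        = ⋂ (p : H), ⋂ (q : H), ⋂ (_ : q ∈ (fun t => (fun v => v + D t) '' B t) p),
          {w : H | (⟪(E p + K p) + q, w - p⟫ : ℝ) ≤ 0} := by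
      ext w
      simp only [Set.mem_iInter, Set.mem_setOf_eq]
    rw [heq]
    refine isClosed_iInter fun p => isClosed_iInter fun q => isClosed_iInter fun _ => ?_
    have hcont : Continuous fun w : H => (⟪(E p + K p) + q, w - p⟫ : ℝ) :=
      Continuous.inner continuous_const (continuous_id.sub continuous_const)
    exact isClosed_le hcont continuous_const
  -- constants
  obtain ⟨C₂, hC₂def⟩ : ∃ C₂ : ℝ, C₂ = 1 + κ*(1/ε + (L_D + βE + ‖K‖)) := ⟨_, rfl⟩
  have hC₂1 : 1 ≤ C₂ := by
    rw [hC₂def]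
    have h1 : 0 ≤ κ*(1/ε + (L_D + βE + ‖K‖)) := by positivity
    linarith
  have hC₂pos : 0 < C₂ := by linarith
  have harg1 : 0 < 1 - ε/(4*C₂^2) := by
    have h1 : ε/(4*C₂^2) ≤ ε/4 := by
      apply div_le_div_of_nonneg_left hε0.le (by norm_num)
      nlinarith
    linarith
  have harg2 : 1 - ε/(4*C₂^2) < 1 := by
    have h1 : 0 < ε/(4*C₂^2) := by positivity
    linarith
  obtain ⟨c, hcdef⟩ : ∃ c : ℝ, c = Real.sqrt (1 - ε/(4*C₂^2)) := ⟨_, rfl⟩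
  have hc0 : 0 < c := by rw [hcdef]; exact Real.sqrt_pos.mpr harg1
  have hc2 : c^2 = 1 - ε/(4*C₂^2) := by rw [hcdef]; exact Real.sq_sqrt harg1.le
  have hc1 : c < 1 := by nlinarith
  -- the contraction estimate
  have hkey : ∀ k, K₀ ≤ k → Metric.infDist (x (k+1)) Z ≤ c * Metric.infDist (x k) Z := by
    intro k hk
    obtain ⟨hUok, hνk⟩ := hK₀ k hk
    have hvmem : (u k + (D (xh k) + E (xh k) + K (xh k))) - D (xh k) - E (xh k) - K (xh k)
        ∈ B (xh k) := by
      have h1 : (u k + (D (xh k) + E (xh k) + K (xh k))) - D (xh k) - E (xh k) - K (xh k)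
          = u k := by abel
      rw [h1]
      exact hu k
    have hsub1 := hsubreg (xh k) _ hUok hvmem ((hvv k).trans_lt hνk)
    have hsub2 : Metric.infDist (xh k) Z ≤ κ*((1/ε + (L_D + βE + ‖K‖))*‖x k - xh k‖) :=
      hsub1.trans (mul_le_mul_of_nonneg_left (hvv k) hκ0)
    have hdx : Metric.infDist (x k) Z ≤ C₂*‖x k - xh k‖ := by
      have h1 := Metric.infDist_le_infDist_add_dist (x := x k) (y := xh k) (s := Z)
      rw [dist_eq_norm] at h1
      rw [hC₂def]
      calc Metric.infDist (x k) Z ≤ Metric.infDist (xh k) Z + ‖x k - xh k‖ := h1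
        _ ≤ κ*((1/ε + (L_D + βE + ‖K‖))*‖x k - xh k‖) + ‖x k - xh k‖ := by linarith
        _ = (1 + κ*(1/ε + (L_D + βE + ‖K‖)))*‖x k - xh k‖ := by ring
    obtain ⟨zk, hzkZ, hzkd⟩ := hZclosed.exists_infDist_eq_dist ⟨z₀, hz₀⟩ (x k)
    have hfj := hfejer zk hzkZ k
    have h1 : ‖x k - zk‖ = Metric.infDist (x k) Z := by rw [hzkd, dist_eq_norm]
    rw [h1] at hfj
    have hle1 : Metric.infDist (x (k+1)) Z ≤ ‖x (k+1) - zk‖ := by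
      have h2 := Metric.infDist_le_dist_of_mem (x := x (k+1)) hzkZ
      rwa [dist_eq_norm] at h2
    have hdk2 : Metric.infDist (x k) Z^2 ≤ C₂^2*‖x k - xh k‖^2 := by
      have h0 := Metric.infDist_nonneg (x := x k) (s := Z)
      nlinarith
    have h2 : (ε/(4*C₂^2))*Metric.infDist (x k) Z^2 ≤ (ε/4)*‖x k - xh k‖^2 := by
      have hident : (ε/(4*C₂^2))*(C₂^2*‖x k - xh k‖^2) = (ε/4)*‖x k - xh k‖^2 := by
        field_simp
      exact (mul_le_mul_of_nonneg_left hdk2 (by positivity)).trans_eq hident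
    have hsq1 : Metric.infDist (x (k+1)) Z^2 ≤ ‖x (k+1) - zk‖^2 := by
      have h0 := Metric.infDist_nonneg (x := x (k+1)) (s := Z)
      nlinarith
    have hsq : Metric.infDist (x (k+1)) Z^2 ≤ c^2 * Metric.infDist (x k) Z^2 := by
      have h3 : c^2*Metric.infDist (x k) Z^2
          = Metric.infDist (x k) Z^2 - (ε/(4*C₂^2))*Metric.infDist (x k) Z^2 := by
        rw [hc2]; ring
      linarith
    have h4 : (c*Metric.infDist (x k) Z)^2 = c^2*Metric.infDist (x k) Z^2 := by ring
    exact le_of_sq_le_sq' Metric.infDist_nonneg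
      (mul_nonneg hc0.le Metric.infDist_nonneg) (by rw [h4]; exact hsq)
  -- correction bounded by the distance
  have hdinf : ∀ k, ‖x k - xh k‖ ≤ (2/Real.sqrt ε)*Metric.infDist (x k) Z := by
    intro k
    obtain ⟨zk, hzkZ, hzkd⟩ := hZclosed.exists_infDist_eq_dist ⟨z₀, hz₀⟩ (x k)
    have hfj := hfejer zk hzkZ k
    have h1 : ‖x k - zk‖ = Metric.infDist (x k) Z := by rw [hzkd, dist_eq_norm]
    rw [h1] at hfj
    have hsε : Real.sqrt ε^2 = ε := Real.sq_sqrt hε0.le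
    have hsε0 : 0 < Real.sqrt ε := Real.sqrt_pos.mpr hε0
    apply le_of_sq_le_sq' (norm_nonneg _)
      (mul_nonneg (by positivity) Metric.infDist_nonneg)
    have h2 : ((2/Real.sqrt ε)*Metric.infDist (x k) Z)^2
        = (4/ε)*Metric.infDist (x k) Z^2 := by
      rw [mul_pow, div_pow, hsε]; ring
    rw [h2]
    have h3 := sq_nonneg ‖x (k+1) - zk‖
    have h4 : (ε/4)*‖x k - xh k‖^2 ≤ Metric.infDist (x k) Z^2 := by linarith
    have h5 : (ε/4)*((4/ε)*Metric.infDist (x k) Z^2) = Metric.infDist (x k) Z^2 := by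
      field_simp
    nlinarith
  -- one-step displacement bound
  have hstepn : ∀ k, ‖x (k+1) - x k‖ ≤ (1 + (L_D + ‖K‖)/ε)*‖x k - xh k‖ := by
    intro k
    have h1 : x (k+1) - x k = -(x k - xh k)
        - γ k • ((D (xh k) + K (xh k)) - (D (x k) + K (x k))) := by
      rw [hupd k]; abel
    have h2 : ‖(D (xh k) + K (xh k)) - (D (x k) + K (x k))‖
        ≤ (L_D + ‖K‖)*‖x k - xh k‖ := by
      have e1 : (D (xh k) + K (xh k)) - (D (x k) + K (x k))
          = (D (xh k) - D (x k)) + (K (xh k) - K (x k)) := by abel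
      have e2 : ‖D (xh k) - D (x k)‖ ≤ L_D*‖x k - xh k‖ := by
        rw [show ‖x k - xh k‖ = ‖xh k - x k‖ from norm_sub_rev _ _]
        exact hD _ _
      have e3 : ‖K (xh k) - K (x k)‖ ≤ ‖K‖*‖x k - xh k‖ := by
        rw [show ‖x k - xh k‖ = ‖xh k - x k‖ from norm_sub_rev _ _, ← map_sub]
        exact K.le_opNorm _
      calc ‖(D (xh k) + K (xh k)) - (D (x k) + K (x k))‖
          ≤ ‖D (xh k) - D (x k)‖ + ‖K (xh k) - K (x k)‖ := by
            rw [e1]; exact norm_add_le _ _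
        _ ≤ (L_D + ‖K‖)*‖x k - xh k‖ := by linarith
    have h3 : ‖x (k+1) - x k‖ ≤ ‖x k - xh k‖
        + γ k * ‖(D (xh k) + K (xh k)) - (D (x k) + K (x k))‖ := by
      rw [h1]
      refine (norm_sub_le _ _).trans ?_
      rw [norm_neg, norm_smul, Real.norm_eq_abs, abs_of_pos (hγpos k)]
    have h4 : γ k * ‖(D (xh k) + K (xh k)) - (D (x k) + K (x k))‖
        ≤ (1/ε) * ((L_D + ‖K‖)*‖x k - xh k‖) := by
      apply mul_le_mul (hγ k).2 h2 (norm_nonneg _)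
      positivity
    calc ‖x (k+1) - x k‖ ≤ ‖x k - xh k‖ + (1/ε)*((L_D + ‖K‖)*‖x k - xh k‖) := by linarith
      _ = (1 + (L_D + ‖K‖)/ε)*‖x k - xh k‖ := by ring
  -- geometric decay
  obtain ⟨Q, hQdef⟩ : ∃ Q : ℝ,
      Q = (1 + (L_D + ‖K‖)/ε)*((2/Real.sqrt ε)*Metric.infDist (x K₀) Z) := ⟨_, rfl⟩
  have hcoef0 : (0:ℝ) ≤ 1 + (L_D + ‖K‖)/ε := by positivity
  have hcoef2 : (0:ℝ) ≤ 2/Real.sqrt ε := by positivity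
  have hQ0 : 0 ≤ Q := by
    rw [hQdef]
    exact mul_nonneg hcoef0 (mul_nonneg hcoef2 Metric.infDist_nonneg)
  have hgeo : ∀ k, K₀ ≤ k →
      Metric.infDist (x k) Z ≤ c^(k - K₀)*Metric.infDist (x K₀) Z := by
    intro k hk
    induction k, hk using Nat.le_induction with
    | base => simp
    | succ n hn ih =>
      have h1 := hkey n hn
      have h2 : Metric.infDist (x (n+1)) Z ≤ c*(c^(n-K₀)*Metric.infDist (x K₀) Z) :=
        h1.trans (mul_le_mul_of_nonneg_left ih hc0.le)
      have h3 : n + 1 - K₀ = (n - K₀) + 1 := by omega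
      rw [h3, pow_succ]
      calc Metric.infDist (x (n+1)) Z ≤ c*(c^(n-K₀)*Metric.infDist (x K₀) Z) := h2
        _ = c^(n-K₀)*c*Metric.infDist (x K₀) Z := by ring
  have hstepgeo : ∀ k, K₀ ≤ k → ‖x (k+1) - x k‖ ≤ Q*c^(k-K₀) := by
    intro k hk
    calc ‖x (k+1) - x k‖ ≤ (1 + (L_D + ‖K‖)/ε)*‖x k - xh k‖ := hstepn k
      _ ≤ (1 + (L_D + ‖K‖)/ε)*((2/Real.sqrt ε)*Metric.infDist (x k) Z) :=
          mul_le_mul_of_nonneg_left (hdinf k) hcoef0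
      _ ≤ (1 + (L_D + ‖K‖)/ε)*((2/Real.sqrt ε)*(c^(k-K₀)*Metric.infDist (x K₀) Z)) := by
          refine mul_le_mul_of_nonneg_left ?_ hcoef0
          exact mul_le_mul_of_nonneg_left (hgeo k hk) hcoef2
      _ = Q*c^(k-K₀) := by rw [hQdef]; ring
  have h1c : 0 < 1 - c := by linarith
  have htail : ∀ k, K₀ ≤ k → ∀ m, k ≤ m →
      ‖x m - x k‖ ≤ (Q*c^(k-K₀))*((1 - c^(m-k))/(1-c)) := by
    intro k hk m hm
    induction m, hm using Nat.le_induction with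
    | base => simp
    | succ m hm ih =>
      have h2 := hstepgeo m (hk.trans hm)
      have h3 : ‖x (m+1) - x k‖ ≤ ‖x (m+1) - x m‖ + ‖x m - x k‖ := by
        have e1 : x (m+1) - x k = (x (m+1) - x m) + (x m - x k) := by abel
        rw [e1]
        exact norm_add_le _ _
      have h4 : c^(m - K₀) = c^(k-K₀)*c^(m-k) := by
        rw [← pow_add]
        congr 1
        omega
      have h5 : m+1-k = (m-k)+1 := by omega
      rw [h5, pow_succ]
      have hpow0 : (0:ℝ) ≤ c^(m-k) := pow_nonneg hc0.le _
      have hQc0 : 0 ≤ Q*c^(k-K₀) := mul_nonneg hQ0 (pow_nonneg hc0.le _)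
      have hcalc : (Q*c^(k-K₀))*c^(m-k) + (Q*c^(k-K₀))*((1-c^(m-k))/(1-c))
          = (Q*c^(k-K₀))*((1-c^(m-k)*c)/(1-c)) := by
        field_simp
        ring
      have h6 : ‖x (m+1) - x m‖ ≤ (Q*c^(k-K₀))*c^(m-k) := by
        rw [h4] at h2
        calc ‖x (m+1) - x m‖ ≤ Q*(c^(k-K₀)*c^(m-k)) := h2
          _ = (Q*c^(k-K₀))*c^(m-k) := by ring
      linarith
  have hnormlim : ∀ k, K₀ ≤ k → ‖x k - wb‖ ≤ (Q*c^(k-K₀))*(1/(1-c)) := by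
    intro k hk
    have hQc0 : 0 ≤ Q*c^(k-K₀) := mul_nonneg hQ0 (pow_nonneg hc0.le _)
    have htendm : Tendsto (fun m => ‖x m - x k‖) atTop (𝓝 ‖wb - x k‖) :=
      (hstrong.sub tendsto_const_nhds).norm
    have hub : ∀ᶠ m in atTop, ‖x m - x k‖ ≤ (Q*c^(k-K₀))*(1/(1-c)) := by
      filter_upwards [eventually_ge_atTop k] with m hm
      have h1 := htail k hk m hm
      have h2 : (1 - c^(m-k))/(1-c) ≤ 1/(1-c) := by
        rw [div_le_div_iff_of_pos_right h1c]
        have := pow_nonneg hc0.le (m-k)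
        linarith
      calc ‖x m - x k‖ ≤ (Q*c^(k-K₀))*((1 - c^(m-k))/(1-c)) := h1
        _ ≤ (Q*c^(k-K₀))*(1/(1-c)) := mul_le_mul_of_nonneg_left h2 hQc0
    have h3 := le_of_tendsto htendm hub
    rwa [norm_sub_rev] at h3
  obtain ⟨R, hRdef⟩ : ∃ R : ℝ, R = (Q*(1/(1-c)))/c^K₀ := ⟨_, rfl⟩
  have hcK0 : 0 < c^K₀ := pow_pos hc0 _
  have hR0 : 0 ≤ R := by
    rw [hRdef]
    exact div_nonneg (mul_nonneg hQ0 (by positivity)) hcK0.le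
  refine ⟨K₀, c, R, hc0.le, hc1, hR0, wb, hwbZ, fun k hk => ⟨hkey k hk, ?_⟩⟩
  have h1 := hnormlim k hk
  have h2 : (Q*c^(k-K₀))*(1/(1-c)) = R*c^k := by
    rw [hRdef, ← pow_sub_mul_pow c hk]
    field_simp
  rw [← h2]
  exact h1
end

section
/- (Relaxed forward-backward splitting with extended step-size range.) Let H be a real Hilbert space, M a bounded self-adjoint strongly positive linear operator on H, B : H → 2^H maximally monotone, and E : H → H (1/β_E)-cocoercive w.r.t. ‖·‖_M with β_E > 0, i.e., ⟨Ex − Ey, x − y⟩ ≥ (1/β_E)‖Ex − Ey‖²_{M⁻¹} for all x, y; assume zer(B + E) := {x : −Ex ∈ Bx} is nonempty. Let ε, ε_θ ∈ (0, 1), and suppose γ_k ∈ [ε, 1/ε] with γ_k·β_E ≤ 4 − ε and θ_k ∈ [ε_θ, 2 − ε_θ] for all k. Let x_0 ∈ H and for each k let x̂_k be the unique point with M x_k − γ_k·E x_k − M x̂_k ∈ γ_k·B x̂_k, and set x_{k+1} := (1 − θ_k(1 − β_E·γ_k/4))·x_k + θ_k(1 − β_E·γ_k/4)·x̂_k. Then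 x_k converges weakly to some x̄ ∈ zer(B + E). -/
open Filter Topology

/-- The norm `‖x‖_M := √⟨x, Mx⟩` induced by a bounded self-adjoint strongly positive
linear operator `M`. -/
noncomputable def pnorm {H : Type*} [NormedAddCommGroup H] [InnerProductSpace ℝ H]
    (M : H →L[ℝ] H) (x : H) : ℝ := Real.sqrt (inner ℝ x (M x))

/-- Weak sequential compactness of bounded sequences in a real Hilbert space. -/
theorem weak_seq_compact {H : Type*} [NormedAddCommGroup H] [InnerProductSpace ℝ H]
    [CompleteSpace H] (x : ℕ → H) (R : ℝ) (hbd : ∀ k, ‖x k‖ ≤ R) :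
    ∃ w : H, ∃ φ : ℕ → ℕ, StrictMono φ ∧
      ∀ y : H, Tendsto (fun j => (inner ℝ (x (φ j)) y : ℝ)) atTop (nhds (inner ℝ w y)) := by
  have hR : 0 ≤ R := le_trans (norm_nonneg _) (hbd 0)
  set f : ℕ → ℕ → ℝ := fun k n => inner ℝ (x k) (x n) with hf
  have hfmem : ∀ k, f k ∈ Set.pi Set.univ fun n => Set.Icc (-(R * ‖x n‖)) (R * ‖x n‖) := by
    intro k n _
    have h := abs_real_inner_le_norm (x k) (x n)
    have h2 : ‖x k‖ * ‖x n‖ ≤ R * ‖x n‖ :=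
      mul_le_mul_of_nonneg_right (hbd k) (norm_nonneg _)
    constructor <;> [linarith [neg_abs_le (f k n), abs_le.mp (h.trans h2)] ;
      exact le_trans (le_abs_self _) (h.trans h2)]
  have hcomp : IsCompact (Set.pi Set.univ fun n => Set.Icc (-(R * ‖x n‖)) (R * ‖x n‖)) :=
    isCompact_univ_pi fun n => isCompact_Icc
  obtain ⟨g, -, φ, hφ, hconv⟩ := hcomp.tendsto_subseq hfmem
  have hpt : ∀ n, ∃ l : ℝ, Tendsto (fun j => (inner ℝ (x (φ j)) (x n) : ℝ)) atTop (nhds l) :=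
    fun n => ⟨g n, (tendsto_pi_nhds.mp hconv) n⟩
  -- convergence on the span
  have hspan : ∀ z ∈ Submodule.span ℝ (Set.range x),
      ∃ l : ℝ, Tendsto (fun j => (inner ℝ (x (φ j)) z : ℝ)) atTop (nhds l) := by
    intro z hz
    induction hz using Submodule.span_induction with
    | mem z hzm => obtain ⟨n, rfl⟩ := hzm; exact hpt n
    | zero => exact ⟨0, by simpa using tendsto_const_nhds⟩
    | add a b _ _ iha ihb =>
        obtain ⟨la, hla⟩ := iha; obtain ⟨lb, hlb⟩ := ihb
        exact ⟨la + lb, by simpa [inner_add_right] using hla.add hlb⟩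
    | smul c a _ iha =>
        obtain ⟨la, hla⟩ := iha
        exact ⟨c * la, by simpa [real_inner_smul_right] using hla.const_mul c⟩
  -- convergence for every y, via projecting onto the closure of the span
  set K := (Submodule.span ℝ (Set.range x)).topologicalClosure with hK
  haveI : CompleteSpace K :=
    (Submodule.span ℝ (Set.range x)).isClosed_topologicalClosure.completeSpace_coe
  have hxK : ∀ k, x k ∈ K :=
    fun k => Submodule.le_topologicalClosure _ (Submodule.subset_span ⟨k, rfl⟩)
  have hcauchy : ∀ y : H, ∃ l : ℝ,
      Tendsto (fun j => (inner ℝ (x (φ j)) y : ℝ)) atTop (nhds l) := by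
    intro y
    set p : H := (K.orthogonalProjectionOnto y : H) with hp
    have hyp : ∀ k, (inner ℝ (x k) y : ℝ) = inner ℝ (x k) p := by
      intro k
      have horth : y - p ∈ Kᗮ := Submodule.sub_starProjection_mem_orthogonal (K := K) y
      have h0 : (inner ℝ (x k) (y - p) : ℝ) =
        0 := Submodule.inner_right_of_mem_orthogonal (hxK k) horth
      rw [inner_sub_right] at h0; linarith
    suffices hcs : CauchySeq (fun j => (inner ℝ (x (φ j)) p : ℝ)) by
      obtain ⟨l, hl⟩ := cauchySeq_tendsto_of_complete hcs
      exact ⟨l, by simpa only [hyp] using hl⟩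
    have hpK : p ∈ closure ((Submodule.span ℝ (Set.range x) : Submodule ℝ H) : Set H) := by
      have : p ∈ K := (K.orthogonalProjectionOnto y).2
      rw [← Submodule.topologicalClosure_coe]
      exact this
    rw [Metric.cauchySeq_iff]
    intro δ hδ
    obtain ⟨z, hzmem, hzd⟩ := Metric.mem_closure_iff.mp hpK (δ / (3 * (R + 1)))
      (by positivity)
    obtain ⟨l, hl⟩ := hspan z hzmem
    have hcz : CauchySeq (fun j => (inner ℝ (x (φ j)) z : ℝ)) := hl.cauchySeq
    obtain ⟨N, hN⟩ := Metric.cauchySeq_iff.mp hcz (δ / 3) (by linarith)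
    refine ⟨N, fun m hm n hn => ?_⟩
    have key : ∀ j, |(inner ℝ (x (φ j)) p : ℝ) - inner ℝ (x (φ j)) z| ≤ δ / 3 := by
      intro j
      rw [← inner_sub_right]
      calc |(inner ℝ (x (φ j)) (p - z) : ℝ)| ≤ ‖x (φ j)‖ * ‖p - z‖ :=
            abs_real_inner_le_norm _ _
        _ ≤ R * (δ / (3 * (R + 1))) := by
            apply mul_le_mul (hbd _) _ (norm_nonneg _) hR
            rw [← dist_eq_norm]; exact le_of_lt hzd
        _ ≤ δ / 3 := by
            have hR1 : (0:ℝ) < R + 1 := by linarith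
            have heq : R * (δ / (3 * (R + 1))) = δ / 3 * (R / (R + 1)) := by
              field_simp
            rw [heq]
            have h6 : R / (R + 1) ≤ 1 := by rw [div_le_one hR1]; linarith
            nlinarith
    have h1 := key m; have h2 := key n
    have h3 := hN m hm n hn
    rw [Real.dist_eq] at h3 ⊢
    calc |(inner ℝ (x (φ m)) p : ℝ) - inner ℝ (x (φ n)) p|
        ≤ |(inner ℝ (x (φ m)) p : ℝ) - inner ℝ (x (φ m)) z|
          + |(inner ℝ (x (φ m)) z : ℝ) - inner ℝ (x (φ n)) z|
          + |(inner ℝ (x (φ n)) z : ℝ) - inner ℝ (x (φ n)) p| := by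
          have h5 := abs_sub_le ((inner ℝ (x (φ m)) p : ℝ)) ((inner ℝ (x (φ m)) z : ℝ))
            ((inner ℝ (x (φ n)) p : ℝ))
          have h4 := abs_sub_le ((inner ℝ (x (φ m)) z : ℝ)) ((inner ℝ (x (φ n)) z : ℝ))
            ((inner ℝ (x (φ n)) p : ℝ))
          linarith
      _ < δ := by rw [abs_sub_comm ((inner ℝ (x (φ n)) z : ℝ))]; linarith
  -- Riesz representation of the limit functional
  choose L hL using hcauchy
  have hadd : ∀ y z, L (y + z) = L y + L z := by
    intro y z
    refine tendsto_nhds_unique (hL (y + z)) ?_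
    simpa [inner_add_right] using (hL y).add (hL z)
  have hsmul : ∀ (c : ℝ) (y), L (c • y) = c * L y := by
    intro c y
    refine tendsto_nhds_unique (hL (c • y)) ?_
    simpa [real_inner_smul_right] using (hL y).const_mul c
  have hbdd : ∀ y, |L y| ≤ R * ‖y‖ := by
    intro y
    have h1 : Tendsto (fun j => |(inner ℝ (x (φ j)) y : ℝ)|) atTop (nhds |L y|) :=
      (hL y).abs
    refine le_of_tendsto h1 (Eventually.of_forall fun j => ?_)
    exact (abs_real_inner_le_norm _ _).trans
      (mul_le_mul_of_nonneg_right (hbd _) (norm_nonneg _))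
  let Llin : H →ₗ[ℝ] ℝ :=
    { toFun := L, map_add' := hadd, map_smul' := hsmul }
  let Lcont : H →L[ℝ] ℝ := LinearMap.mkContinuous Llin R fun y => by
    simpa [Llin, Real.norm_eq_abs] using hbdd y
  refine ⟨(InnerProductSpace.toDual ℝ H).symm Lcont, φ, hφ, fun y => ?_⟩
  rw [InnerProductSpace.toDual_symm_apply]
  exact hL y

/-- Scalar core of the descent inequality for relaxed FB splitting. -/
theorem descent_scalar (β γ θ ε εθ q r s w2 Qe lam : ℝ)
    (hβ : 0 < β) (hε : 0 < ε) (hε1 : ε < 1) (hεθ : 0 < εθ) (hεθ1 : εθ < 1)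
    (hγl : ε ≤ γ) (hγub : γ * β ≤ 4 - ε) (hθl : εθ ≤ θ) (hθu : θ ≤ 2 - εθ)
    (hlam : lam = θ * (1 - β * γ / 4))
    (hq : 0 ≤ q) (hQe : 0 ≤ Qe)
    (F1 : r + q + γ * s + γ * w2 ≤ 0)
    (F2 : (1 / β) * Qe ≤ s)
    (F3 : ∀ t0 : ℝ, 0 < t0 → -w2 ≤ t0 * Qe + 1 / (4 * t0) * q) :
    2 * lam * r + lam ^ 2 * q ≤
      -(εθ ^ 2 * ε ^ 2 / 32) * q
      - (εθ * ε ^ 2 * (εθ * ε / 16) / (2 * β * (1 + εθ * ε / 16))) * Qe := by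
  set ρ : ℝ := εθ * ε / 16 with hρ
  have hρpos : 0 < ρ := by positivity
  have hγpos : 0 < γ := lt_of_lt_of_le hε hγl
  set t0 : ℝ := 1 / (β * (1 + ρ)) with ht0
  have ht0pos : 0 < t0 := by positivity
  have hβρ : (0:ℝ) < β * (1 + ρ) := by positivity
  have h4t0 : 1 / (4 * t0) = β * (1 + ρ) / 4 := by
    rw [ht0]; field_simp
  have hη : 1 / β - t0 = ρ / (β * (1 + ρ)) := by
    rw [ht0]; field_simp; ring
  have hηpos : 0 < ρ / (β * (1 + ρ)) := by positivity
  have hfac_lo : ε / 4 ≤ 1 - β * γ / 4 := by linarith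
  have hfac_pos : 0 < 1 - β * γ / 4 := by linarith
  have hlam_lo : εθ * ε / 4 ≤ lam := by
    rw [hlam]
    calc εθ * ε / 4 = εθ * (ε / 4) := by ring
      _ ≤ θ * (1 - β * γ / 4) :=
        mul_le_mul hθl hfac_lo (by positivity) (by linarith)
  have hlam_pos : 0 < lam := lt_of_lt_of_le (by positivity) hlam_lo
  have hkey : lam + γ * β * (1 + ρ) / 2 - 2 ≤ -(εθ * ε / 8) := by
    have h1 : lam + γ * β / 2 - 2 = (θ - 2) * (1 - β * γ / 4) := by rw [hlam]; ring
    have ha : θ - 2 ≤ -εθ := by linarith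
    have hb : (θ - 2) * (1 - β * γ / 4) ≤ (-εθ) * (1 - β * γ / 4) :=
      mul_le_mul_of_nonneg_right ha (le_of_lt hfac_pos)
    have hc : (-εθ) * (1 - β * γ / 4) ≤ (-εθ) * (ε / 4) :=
      mul_le_mul_of_nonpos_left hfac_lo (by linarith)
    have h3 : γ * β * ρ ≤ (4 - ε) * ρ :=
      mul_le_mul_of_nonneg_right hγub (le_of_lt hρpos)
    have h3b : ε * ρ ≥ 0 := by positivity
    have h4 : (2:ℝ) * ρ = εθ * ε / 8 := by rw [hρ]; ring
    linarith [h1, hb, hc, h3, h3b, h4]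
  have hF3 := F3 t0 ht0pos
  rw [h4t0] at hF3
  have h2lamγ : (0:ℝ) ≤ 2 * lam * γ := by positivity
  have hr : r ≤ -q - γ * s - γ * w2 := by linarith
  have step1 : 2 * lam * r ≤ 2 * lam * (-q - γ * s - γ * w2) :=
    mul_le_mul_of_nonneg_left hr (by positivity)
  have m2 : -(2 * lam * γ * s) ≤ -(2 * lam * γ * ((1 / β) * Qe)) := by
    have := mul_le_mul_of_nonneg_left F2 h2lamγ
    linarith
  have m3 : -(2 * lam * γ * w2) ≤
      2 * lam * γ * (t0 * Qe) + 2 * lam * γ * (β * (1 + ρ) / 4 * q) := by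
    have := mul_le_mul_of_nonneg_left hF3 h2lamγ
    linarith
  have hcoefq : lam ^ 2 * q - 2 * lam * q + 2 * lam * γ * (β * (1 + ρ) / 4 * q)
      ≤ -(εθ ^ 2 * ε ^ 2 / 32) * q := by
    have h6 : lam ^ 2 - 2 * lam + 2 * lam * γ * (β * (1 + ρ) / 4)
        = lam * (lam + γ * β * (1 + ρ) / 2 - 2) := by ring
    have h7 : lam * (lam + γ * β * (1 + ρ) / 2 - 2) ≤ lam * (-(εθ * ε / 8)) :=
      mul_le_mul_of_nonneg_left hkey (le_of_lt hlam_pos)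
    have h8 : lam * (-(εθ * ε / 8)) ≤ (εθ * ε / 4) * (-(εθ * ε / 8)) :=
      mul_le_mul_of_nonpos_right hlam_lo (neg_nonpos.mpr (by positivity))
    have h10 : lam ^ 2 - 2 * lam + 2 * lam * γ * (β * (1 + ρ) / 4)
        ≤ -(εθ ^ 2 * ε ^ 2 / 32) := by
      have h9 : (εθ * ε / 4) * (-(εθ * ε / 8)) = -(εθ ^ 2 * ε ^ 2 / 32) := by ring
      linarith [h6, h7, h8, h9]
    calc lam ^ 2 * q - 2 * lam * q + 2 * lam * γ * (β * (1 + ρ) / 4 * q)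
        = (lam ^ 2 - 2 * lam + 2 * lam * γ * (β * (1 + ρ) / 4)) * q := by ring
      _ ≤ -(εθ ^ 2 * ε ^ 2 / 32) * q := mul_le_mul_of_nonneg_right h10 hq
  have hcoefQ : 2 * lam * γ * (t0 * Qe) - 2 * lam * γ * ((1 / β) * Qe)
      ≤ -(εθ * ε ^ 2 * ρ / (2 * β * (1 + ρ))) * Qe := by
    have h11 : 2 * (εθ * ε / 4) * ε * (ρ / (β * (1 + ρ)))
        ≤ 2 * lam * γ * (1 / β - t0) := by
      rw [hη]
      have hx0 : (εθ * ε / 4) * ε ≤ lam * γ :=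
        mul_le_mul hlam_lo hγl (le_of_lt hε) (le_of_lt hlam_pos)
      have hx1 : 2 * (εθ * ε / 4) * ε ≤ 2 * lam * γ := by linarith
      exact mul_le_mul_of_nonneg_right hx1 (le_of_lt hηpos)
    have h12 : 2 * (εθ * ε / 4) * ε * (ρ / (β * (1 + ρ)))
        = εθ * ε ^ 2 * ρ / (2 * β * (1 + ρ)) := by
      field_simp; ring
    have h13 : 2 * lam * γ * t0 - 2 * lam * γ * (1 / β)
        ≤ -(εθ * ε ^ 2 * ρ / (2 * β * (1 + ρ))) := by linarith [h11, h12]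
    calc 2 * lam * γ * (t0 * Qe) - 2 * lam * γ * ((1 / β) * Qe)
        = (2 * lam * γ * t0 - 2 * lam * γ * (1 / β)) * Qe := by ring
      _ ≤ -(εθ * ε ^ 2 * ρ / (2 * β * (1 + ρ))) * Qe :=
        mul_le_mul_of_nonneg_right h13 hQe
  linarith [step1, m2, m3, hcoefq, hcoefQ]

/-- One step of the relaxed forward-backward iteration, vector form. -/
theorem descent_step {H : Type*} [NormedAddCommGroup H] [InnerProductSpace ℝ H]
    (M Minv : H →L[ℝ] H)
    (hMsym : ∀ a b : H, (inner ℝ (M a) b : ℝ) = inner ℝ a (M b))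
    (hMinv1 : ∀ v, M (Minv v) = v)
    (hNpos : ∀ v : H, (0:ℝ) ≤ inner ℝ v (M v))
    (β γ θ ε εθ : ℝ)
    (hβ : 0 < β) (hε : 0 < ε) (hε1 : ε < 1) (hεθ : 0 < εθ) (hεθ1 : εθ < 1)
    (hγl : ε ≤ γ) (hγub : γ * β ≤ 4 - ε) (hθl : εθ ≤ θ) (hθu : θ ≤ 2 - εθ)
    (A D e uEz : H)
    (hmono : (0:ℝ) ≤ inner ℝ uEz (A + D))
    (hueq : γ • uEz = -(M D) - γ • e)
    (hcoco : (1 / β) * (inner ℝ e (Minv e) : ℝ) ≤ inner ℝ e A) :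
    (inner ℝ (A + (θ * (1 - β * γ / 4)) • D) (M (A + (θ * (1 - β * γ / 4)) • D)) : ℝ) ≤
      inner ℝ A (M A) - (εθ ^ 2 * ε ^ 2 / 32) * inner ℝ D (M D)
      - (εθ * ε ^ 2 * (εθ * ε / 16) / (2 * β * (1 + εθ * ε / 16))) * inner ℝ e (Minv e) := by
  have hγpos : 0 < γ := lt_of_lt_of_le hε hγl
  set lam : ℝ := θ * (1 - β * γ / 4) with hlam
  set p : ℝ := inner ℝ A (M A) with hp
  set q : ℝ := inner ℝ D (M D) with hq'
  set r : ℝ := inner ℝ D (M A) with hr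
  set s : ℝ := inner ℝ e A with hs
  set w2 : ℝ := inner ℝ e D with hw2
  set Qe : ℝ := inner ℝ e (Minv e) with hQe'
  have hq : 0 ≤ q := hNpos D
  have hQee : Qe = inner ℝ (Minv e) (M (Minv e)) := by
    rw [hQe', hMinv1, real_inner_comm]
  have hQe : 0 ≤ Qe := hQee ▸ hNpos (Minv e)
  -- F1 from monotonicity
  have hγmono : (0:ℝ) ≤ γ * inner ℝ uEz (A + D) := mul_nonneg (le_of_lt hγpos) hmono
  have hexp1 : γ * (inner ℝ uEz (A + D) : ℝ) = -(r + q + γ * s + γ * w2) := by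
    rw [← real_inner_smul_left, hueq]
    simp only [inner_sub_left, inner_add_right, inner_neg_left, real_inner_smul_left]
    have e1 : (inner ℝ (M D) A : ℝ) = r := (hMsym D A).trans hr.symm
    have e2 : (inner ℝ (M D) D : ℝ) = q := (hMsym D D).trans hq'.symm
    rw [e1, e2, hs, hw2]; ring
  have F1 : r + q + γ * s + γ * w2 ≤ 0 := by
    rw [hexp1] at hγmono; linarith
  -- F3 from positivity of the M-form
  have F3 : ∀ t0 : ℝ, 0 < t0 → -w2 ≤ t0 * Qe + 1 / (4 * t0) * q := by
    intro t0 ht0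
    have hnn := hNpos ((2 * t0) • Minv e + D)
    have hexp2 : (inner ℝ ((2 * t0) • Minv e + D) (M ((2 * t0) • Minv e + D)) : ℝ)
        = 4 * t0 ^ 2 * Qe + 4 * t0 * w2 + q := by
      rw [map_add, map_smul]
      simp only [inner_add_left, inner_add_right, real_inner_smul_left,
        real_inner_smul_right]
      have e3 : (inner ℝ (Minv e) (M (Minv e)) : ℝ) = Qe := hQee.symm
      have e4 : (inner ℝ (Minv e) (M D) : ℝ) = w2 := by
        rw [← hMsym, hMinv1]
      have e5 : (inner ℝ D (M (Minv e)) : ℝ) = w2 := by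
        rw [hMinv1, real_inner_comm]
      rw [e3, e4, e5, hq']; ring
    rw [hexp2] at hnn
    have h4t0 : (0:ℝ) < 4 * t0 := by linarith
    have h16 : 0 ≤ t0 * Qe + 1 / (4 * t0) * q + w2 := by
      by_contra hneg
      push_neg at hneg
      have hprod : (4 * t0) * (t0 * Qe + 1 / (4 * t0) * q + w2) < 0 :=
        mul_neg_of_pos_of_neg h4t0 hneg
      have hexp4 : (4 * t0) * (t0 * Qe + 1 / (4 * t0) * q + w2)
          = 4 * t0 ^ 2 * Qe + q + 4 * t0 * w2 := by
        field_simp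
      rw [hexp4] at hprod
      linarith
    linarith
  have hstep := descent_scalar β γ θ ε εθ q r s w2 Qe lam hβ hε hε1 hεθ hεθ1
    hγl hγub hθl hθu hlam hq hQe F1 hcoco F3
  have hexp3 : (inner ℝ (A + lam • D) (M (A + lam • D)) : ℝ) = p + 2 * lam * r + lam ^ 2 * q := by
    rw [map_add, map_smul]
    simp only [inner_add_left, inner_add_right, real_inner_smul_left, real_inner_smul_right]
    have e6 : (inner ℝ A (M D) : ℝ) = r := by
      rw [← hMsym A D, real_inner_comm]
    have e7 : (inner ℝ D (M A) : ℝ) = r := hr.symm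
    rw [e6, e7, hp, hq']; ring
  rw [hexp3]
  linarith [hstep]

set_option maxHeartbeats 1000000 in
/-- weak convergence of relaxed forward-backward splitting with the
extended step-size range `γ_k·β_E ≤ 4 − ε`. -/
theorem relaxed_forward_backward_convergence
    {H : Type*} [NormedAddCommGroup H] [InnerProductSpace ℝ H] [CompleteSpace H]
    (M Minv : H →L[ℝ] H)
    (hMsa : IsSelfAdjoint M)
    (hMpos : ∃ c > 0, ∀ x : H, c * ‖x‖ ^ 2 ≤ inner ℝ x (M x))
    (hMinv₁ : M.comp Minv = ContinuousLinearMap.id ℝ H)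
    (hMinv₂ : Minv.comp M = ContinuousLinearMap.id ℝ H)
    (B : H → Set H) (hB : IsMaxMonotoneOp B)
    (βE : ℝ) (hβE : 0 < βE)
    (E : H → H)
    (hE : ∀ x y : H,
      (1 / βE) * pnorm Minv (E x - E y) ^ 2 ≤ inner ℝ (E x - E y) (x - y))
    (hzer : ∃ x : H, -E x ∈ B x)
    (ε εθ : ℝ) (hε : 0 < ε ∧ ε < 1) (hεθ : 0 < εθ ∧ εθ < 1)
    (γ θ : ℕ → ℝ)
    (hγ : ∀ k, ε ≤ γ k ∧ γ k ≤ 1 / ε)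
    (hγUB : ∀ k, γ k * βE ≤ 4 - ε)
    (hθ : ∀ k, εθ ≤ θ k ∧ θ k ≤ 2 - εθ)
    -- the algorithm
    (x xh : ℕ → H)
    (hxh : ∀ k, ∃ u ∈ B (xh k), M (x k) - γ k • E (x k) - M (xh k) = γ k • u)
    (hupd : ∀ k, x (k + 1) =
      (1 - θ k * (1 - βE * γ k / 4)) • x k + (θ k * (1 - βE * γ k / 4)) • xh k) :
    ∃ xbar : H, -E xbar ∈ B xbar ∧ WeakConvergesTo x xbar := by
  obtain ⟨hε0, hε1⟩ := hε
  obtain ⟨hεθ0, hεθ1⟩ := hεθ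
  obtain ⟨c, hc, hcM⟩ := hMpos
  -- basic facts about M and Minv
  have hMsym : ∀ a b : H, (inner ℝ (M a) b : ℝ) = inner ℝ a (M b) := fun a b =>
    (ContinuousLinearMap.isSelfAdjoint_iff_isSymmetric.mp hMsa) a b
  have hMinv1 : ∀ v, M (Minv v) = v := fun v => by
    have h := ContinuousLinearMap.ext_iff.mp hMinv₁ v
    simpa using h
  have hNpos : ∀ v : H, (0:ℝ) ≤ inner ℝ v (M v) := fun v =>
    le_trans (by positivity) (hcM v)
  have hQid : ∀ v : H, (inner ℝ v (Minv v) : ℝ) = inner ℝ (Minv v) (M (Minv v)) := fun v => by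
    rw [hMinv1 v, real_inner_comm]
  have hQpos : ∀ v : H, (0:ℝ) ≤ inner ℝ v (Minv v) := fun v => (hQid v) ▸ hNpos (Minv v)
  have hMinvsym : ∀ a b : H, (inner ℝ a (Minv b) : ℝ) = inner ℝ (Minv a) b := fun a b => by
    conv_lhs => rw [← hMinv1 a]
    rw [hMsym, hMinv1]
  have hpn : ∀ v : H, pnorm Minv v ^ 2 = (inner ℝ v (Minv v) : ℝ) := fun v =>
    Real.sq_sqrt (hQpos v)
  have hnormQ : ∀ v : H, c * ‖v‖ ^ 2 ≤ ‖M‖ ^ 2 * (inner ℝ v (Minv v) : ℝ) := by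
    intro v
    have h1 : ‖v‖ ≤ ‖M‖ * ‖Minv v‖ := by
      conv_lhs => rw [← hMinv1 v]
      exact M.le_opNorm _
    have h2 : ‖v‖ ^ 2 ≤ (‖M‖ * ‖Minv v‖) ^ 2 :=
      pow_le_pow_left₀ (norm_nonneg v) h1 2
    have h3 : c * ‖Minv v‖ ^ 2 ≤ (inner ℝ v (Minv v) : ℝ) := (hQid v) ▸ hcM (Minv v)
    have h4 := mul_le_mul_of_nonneg_left h2 hc.le
    have h5 := mul_le_mul_of_nonneg_left h3 (sq_nonneg ‖M‖)
    nlinarith [h4, h5]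
  -- the algorithm data
  choose u hu hueq using hxh
  have huE : ∀ (z : H) (k : ℕ), γ k • (u k + E z)
      = -(M (xh k - x k)) - γ k • (E (x k) - E z) := by
    intro z k
    rw [smul_add, ← hueq k, map_sub, smul_sub]
    abel
  have hmonoz : ∀ (z : H), -E z ∈ B z → ∀ k,
      (0:ℝ) ≤ inner ℝ (u k + E z) ((x k - z) + (xh k - x k)) := by
    intro z hz k
    have h := hB.1 (hu k) hz
    have e1 : u k - -E z = u k + E z := by abel
    have e2 : xh k - z = (x k - z) + (xh k - x k) := by abel
    rwa [e1, e2] at h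
  have hcocoz : ∀ (z : H) (k : ℕ),
      (1 / βE) * (inner ℝ (E (x k) - E z) (Minv (E (x k) - E z)) : ℝ)
        ≤ inner ℝ (E (x k) - E z) (x k - z) := by
    intro z k
    have h := hE (x k) z
    rwa [hpn] at h
  set δ1 : ℝ := εθ ^ 2 * ε ^ 2 / 32 with hδ1def
  set δ2 : ℝ := εθ * ε ^ 2 * (εθ * ε / 16) / (2 * βE * (1 + εθ * ε / 16)) with hδ2def
  have hδ1 : 0 < δ1 := by positivity
  have hδ2 : 0 < δ2 := by positivity
  -- the key descent inequality
  have key : ∀ (z : H), -E z ∈ B z → ∀ k,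
      (inner ℝ (x (k+1) - z) (M (x (k+1) - z)) : ℝ)
        ≤ inner ℝ (x k - z) (M (x k - z))
          - δ1 * inner ℝ (xh k - x k) (M (xh k - x k))
          - δ2 * inner ℝ (E (x k) - E z) (Minv (E (x k) - E z)) := by
    intro z hz k
    have hstep := descent_step M Minv hMsym hMinv1 hNpos βE (γ k) (θ k) ε εθ
      hβE hε0 hε1 hεθ0 hεθ1 (hγ k).1 (hγUB k) (hθ k).1 (hθ k).2
      (x k - z) (xh k - x k) (E (x k) - E z) (u k + E z)
      (hmonoz z hz k) (huE z k) (hcocoz z k)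
    have hxe : x (k+1) - z = (x k - z) + (θ k * (1 - βE * γ k / 4)) • (xh k - x k) := by
      rw [hupd k]; module
    rw [hxe]; exact hstep
  -- monotone convergence of the Lyapunov sequences
  have hanti : ∀ (z : H), -E z ∈ B z →
      Antitone (fun k => (inner ℝ (x k - z) (M (x k - z)) : ℝ)) := by
    intro z hz
    apply antitone_nat_of_succ_le
    intro k
    have h := key z hz k
    have h1 : 0 ≤ δ1 * (inner ℝ (xh k - x k) (M (xh k - x k)) : ℝ) :=
      mul_nonneg hδ1.le (hNpos _)
    have h2 : 0 ≤ δ2 * (inner ℝ (E (x k) - E z) (Minv (E (x k) - E z)) : ℝ) :=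
      mul_nonneg hδ2.le (hQpos _)
    linarith
  have hNconv : ∀ (z : H), -E z ∈ B z → ∃ L : ℝ,
      Tendsto (fun k => (inner ℝ (x k - z) (M (x k - z)) : ℝ)) atTop (nhds L) := by
    intro z hz
    refine ⟨_, tendsto_atTop_ciInf (hanti z hz) ⟨0, ?_⟩⟩
    rintro a ⟨k, rfl⟩
    exact hNpos _
  -- the reference zero
  obtain ⟨xs, hxs⟩ := hzer
  obtain ⟨Ls, hLs⟩ := hNconv xs hxs
  have hLs' : Tendsto (fun k => (inner ℝ (x (k+1) - xs) (M (x (k+1) - xs)) : ℝ))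
      atTop (nhds Ls) := hLs.comp (tendsto_add_atTop_nat 1)
  have hdiff0 : Tendsto (fun k => ((inner ℝ (x k - xs) (M (x k - xs)) : ℝ)
      - inner ℝ (x (k+1) - xs) (M (x (k+1) - xs)))) atTop (nhds 0) := by
    have := hLs.sub hLs'
    simpa using this
  -- q k → 0 and Qe k → 0
  have hq0 : Tendsto (fun k => (inner ℝ (xh k - x k) (M (xh k - x k)) : ℝ))
      atTop (nhds 0) := by
    apply squeeze_zero (fun k => hNpos _)
      (g := fun k => ((inner ℝ (x k - xs) (M (x k - xs)) : ℝ)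
        - inner ℝ (x (k+1) - xs) (M (x (k+1) - xs))) / δ1)
    · intro k
      have h := key xs hxs k
      have h2 : 0 ≤ δ2 * (inner ℝ (E (x k) - E xs) (Minv (E (x k) - E xs)) : ℝ) :=
        mul_nonneg hδ2.le (hQpos _)
      rw [le_div_iff₀ hδ1]
      nlinarith
    · simpa using hdiff0.div_const δ1
  have hQe0 : Tendsto (fun k => (inner ℝ (E (x k) - E xs) (Minv (E (x k) - E xs)) : ℝ))
      atTop (nhds 0) := by
    apply squeeze_zero (fun k => hQpos _)
      (g := fun k => ((inner ℝ (x k - xs) (M (x k - xs)) : ℝ)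
        - inner ℝ (x (k+1) - xs) (M (x (k+1) - xs))) / δ2)
    · intro k
      have h := key xs hxs k
      have h1 : 0 ≤ δ1 * (inner ℝ (xh k - x k) (M (xh k - x k)) : ℝ) :=
        mul_nonneg hδ1.le (hNpos _)
      rw [le_div_iff₀ hδ2]
      nlinarith
    · simpa using hdiff0.div_const δ2
  -- strong convergences
  have hd0 : Tendsto (fun k => ‖xh k - x k‖) atTop (nhds 0) := by
    have hup : ∀ k, ‖xh k - x k‖ ≤
        Real.sqrt ((inner ℝ (xh k - x k) (M (xh k - x k)) : ℝ) / c) := by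
      intro k
      rw [show ‖xh k - x k‖ = Real.sqrt (‖xh k - x k‖ ^ 2) from
        (Real.sqrt_sq (norm_nonneg _)).symm]
      apply Real.sqrt_le_sqrt
      rw [le_div_iff₀ hc]
      have := hcM (xh k - x k)
      linarith
    apply squeeze_zero (fun k => norm_nonneg _) hup
    have := (hq0.div_const c).sqrt
    simpa using this
  have he0 : Tendsto (fun k => ‖E (x k) - E xs‖) atTop (nhds 0) := by
    have hup : ∀ k, ‖E (x k) - E xs‖ ≤
        Real.sqrt (‖M‖ ^ 2 * (inner ℝ (E (x k) - E xs) (Minv (E (x k) - E xs)) : ℝ) / c) := by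
      intro k
      rw [show ‖E (x k) - E xs‖ = Real.sqrt (‖E (x k) - E xs‖ ^ 2) from
        (Real.sqrt_sq (norm_nonneg _)).symm]
      apply Real.sqrt_le_sqrt
      rw [le_div_iff₀ hc]
      have := hnormQ (E (x k) - E xs)
      linarith
    apply squeeze_zero (fun k => norm_nonneg _) hup
    have := (((hQe0.const_mul (‖M‖ ^ 2)).div_const c).sqrt)
    simpa using this
  -- u k → -E xs
  have hu0 : Tendsto (fun k => ‖u k + E xs‖) atTop (nhds 0) := by
    have hup : ∀ k, ‖u k + E xs‖ ≤
        (‖M‖ * ‖xh k - x k‖ + (1/ε) * ‖E (x k) - E xs‖) / ε := by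
      intro k
      have hγk : 0 < γ k := lt_of_lt_of_le hε0 (hγ k).1
      have h1 : γ k * ‖u k + E xs‖ = ‖γ k • (u k + E xs)‖ := by
        rw [norm_smul, Real.norm_eq_abs, abs_of_pos hγk]
      have h2 : ‖γ k • (u k + E xs)‖ ≤ ‖M‖ * ‖xh k - x k‖ + γ k * ‖E (x k) - E xs‖ := by
        rw [huE xs k]
        calc ‖-(M (xh k - x k)) - γ k • (E (x k) - E xs)‖
            ≤ ‖-(M (xh k - x k))‖ + ‖γ k • (E (x k) - E xs)‖ := norm_sub_le _ _
          _ ≤ ‖M‖ * ‖xh k - x k‖ + γ k * ‖E (x k) - E xs‖ := by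
              rw [norm_neg, norm_smul, Real.norm_eq_abs, abs_of_pos hγk]
              exact add_le_add_left (M.le_opNorm _) _
      have h3 : γ k * ‖E (x k) - E xs‖ ≤ (1/ε) * ‖E (x k) - E xs‖ :=
        mul_le_mul_of_nonneg_right (hγ k).2 (norm_nonneg _)
      rw [le_div_iff₀ hε0]
      have h4 : ε * ‖u k + E xs‖ ≤ γ k * ‖u k + E xs‖ :=
        mul_le_mul_of_nonneg_right (hγ k).1 (norm_nonneg _)
      calc ‖u k + E xs‖ * ε = ε * ‖u k + E xs‖ := by ring
        _ ≤ γ k * ‖u k + E xs‖ := h4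
        _ = ‖γ k • (u k + E xs)‖ := h1
        _ ≤ ‖M‖ * ‖xh k - x k‖ + γ k * ‖E (x k) - E xs‖ := h2
        _ ≤ ‖M‖ * ‖xh k - x k‖ + (1/ε) * ‖E (x k) - E xs‖ := by linarith
    apply squeeze_zero (fun k => norm_nonneg _) hup
    have := (((hd0.const_mul ‖M‖).add (he0.const_mul (1/ε))).div_const ε)
    simpa using this
  -- uniform bound on the iterates
  set Rb : ℝ := ‖xs‖ + Real.sqrt ((inner ℝ (x 0 - xs) (M (x 0 - xs)) : ℝ) / c) with hRb
  have hxbd : ∀ k, ‖x k‖ ≤ Rb := by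
    intro k
    have h1 : (inner ℝ (x k - xs) (M (x k - xs)) : ℝ)
        ≤ inner ℝ (x 0 - xs) (M (x 0 - xs)) := hanti xs hxs (Nat.zero_le k)
    have h2 : ‖x k - xs‖ ≤ Real.sqrt ((inner ℝ (x 0 - xs) (M (x 0 - xs)) : ℝ) / c) := by
      rw [show ‖x k - xs‖ = Real.sqrt (‖x k - xs‖ ^ 2) from
        (Real.sqrt_sq (norm_nonneg _)).symm]
      apply Real.sqrt_le_sqrt
      rw [le_div_iff₀ hc]
      have := hcM (x k - xs)
      linarith
    calc ‖x k‖ = ‖xs + (x k - xs)‖ := by congr 1; abel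
      _ ≤ ‖xs‖ + ‖x k - xs‖ := norm_add_le _ _
      _ ≤ Rb := by rw [hRb]; linarith
  -- every subsequence has a further subsequence converging weakly to a zero
  have main : ∀ ns : ℕ → ℕ, Tendsto ns atTop atTop →
      ∃ w : H, (-E w ∈ B w) ∧ ∃ ms : ℕ → ℕ,
        Tendsto (fun j => ns (ms j)) atTop atTop ∧
        ∀ y : H, Tendsto (fun j => (inner ℝ (x (ns (ms j))) y : ℝ)) atTop (nhds (inner ℝ w y)) := by
    intro ns hns
    obtain ⟨w, φ, hφ, hw⟩ := weak_seq_compact (fun j => x (ns j)) Rb (fun j => hxbd _)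
    have hκtop : Tendsto (fun j => ns (φ j)) atTop atTop := hns.comp hφ.tendsto_atTop
    set κ : ℕ → ℕ := fun j => ns (φ j) with hκ
    have hwκ : ∀ y : H, Tendsto (fun j => (inner ℝ (x (κ j)) y : ℝ)) atTop (nhds (inner ℝ w y)) :=
      fun y => hw y
    have hdκ : Tendsto (fun j => ‖xh (κ j) - x (κ j)‖) atTop (nhds 0) := hd0.comp hκtop
    have heκ : Tendsto (fun j => ‖E (x (κ j)) - E xs‖) atTop (nhds 0) := he0.comp hκtop
    have huκ : Tendsto (fun j => ‖u (κ j) + E xs‖) atTop (nhds 0) := hu0.comp hκtop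
    -- step 1 : -E xs ∈ B w
    have hBw : -E xs ∈ B w := by
      apply hB.2
      intro y v hv
      set a : H := -E xs - v with ha
      have hsplit : ∀ j, (inner ℝ (u (κ j) - v) (xh (κ j) - y) : ℝ)
          = inner ℝ (u (κ j) + E xs) (xh (κ j) - y)
            + (inner ℝ a (x (κ j) - y) : ℝ)
            + inner ℝ a (xh (κ j) - x (κ j)) := by
        intro j
        have e1 : u (κ j) - v = (u (κ j) + E xs) + a := by rw [ha]; abel
        rw [e1, inner_add_left,
          show xh (κ j) - y = (x (κ j) - y) + (xh (κ j) - x (κ j)) from by abel,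
          inner_add_right]
        rw [inner_add_right]
        ring
      -- term 1 tends to 0
      have hT1 : Tendsto (fun j => (inner ℝ (u (κ j) + E xs) (xh (κ j) - y) : ℝ))
          atTop (nhds 0) := by
        have hbnd : ∀ j, ‖(inner ℝ (u (κ j) + E xs) (xh (κ j) - y) : ℝ)‖
            ≤ ‖u (κ j) + E xs‖ * (‖xh (κ j) - x (κ j)‖ + Rb + ‖y‖) := by
          intro j
          calc ‖(inner ℝ (u (κ j) + E xs) (xh (κ j) - y) : ℝ)‖
              ≤ ‖u (κ j) + E xs‖ * ‖xh (κ j) - y‖ := by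
                rw [Real.norm_eq_abs]; exact abs_real_inner_le_norm _ _
            _ ≤ ‖u (κ j) + E xs‖ * (‖xh (κ j) - x (κ j)‖ + Rb + ‖y‖) := by
                apply mul_le_mul_of_nonneg_left _ (norm_nonneg _)
                calc ‖xh (κ j) - y‖ = ‖(xh (κ j) - x (κ j)) + (x (κ j) - y)‖ := by
                      congr 1; abel
                  _ ≤ ‖xh (κ j) - x (κ j)‖ + ‖x (κ j) - y‖ := norm_add_le _ _
                  _ ≤ ‖xh (κ j) - x (κ j)‖ + (Rb + ‖y‖) := by
                      have := norm_sub_le (x (κ j)) y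
                      have := hxbd (κ j)
                      linarith
                  _ = ‖xh (κ j) - x (κ j)‖ + Rb + ‖y‖ := by ring
        refine squeeze_zero_norm hbnd ?_
        have := huκ.mul ((hdκ.add_const Rb).add_const ‖y‖)
        simpa using this
      -- term 3 tends to 0
      have hT3 : Tendsto (fun j => (inner ℝ a (xh (κ j) - x (κ j)) : ℝ)) atTop (nhds 0) := by
        have hbnd : ∀ j, ‖(inner ℝ a (xh (κ j) - x (κ j)) : ℝ)‖
            ≤ ‖a‖ * ‖xh (κ j) - x (κ j)‖ := by
          intro j
          rw [Real.norm_eq_abs]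
          exact abs_real_inner_le_norm _ _
        refine squeeze_zero_norm hbnd ?_
        simpa using hdκ.const_mul ‖a‖
      -- term 2 tends to ⟪a, w⟫ - ⟪a, y⟫
      have base' : Tendsto (fun j => (inner ℝ a (x (κ j)) : ℝ)) atTop (nhds (inner ℝ a w)) := by
        have h := hwκ a
        have e3 : (inner ℝ w a : ℝ) = inner ℝ a w := real_inner_comm _ _
        rw [e3] at h
        exact h.congr fun j => real_inner_comm _ _
      have hT2 : Tendsto (fun j => (inner ℝ a (x (κ j) - y) : ℝ)) atTop
          (nhds ((inner ℝ a w : ℝ) - inner ℝ a y)) := by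
        have := base'.sub_const ((inner ℝ a y : ℝ))
        refine this.congr fun j => ?_
        rw [inner_sub_right]
      have hlim : Tendsto (fun j => (inner ℝ (u (κ j) - v) (xh (κ j) - y) : ℝ)) atTop
          (nhds (0 + ((inner ℝ a w : ℝ) - inner ℝ a y) + 0)) := by
        have h := (hT1.add hT2).add hT3
        refine h.congr fun j => (hsplit j).symm
      have hnonneg : (0:ℝ) ≤ 0 + ((inner ℝ a w : ℝ) - inner ℝ a y) + 0 :=
        ge_of_tendsto' hlim (fun j => hB.1 (hu (κ j)) hv)
      rw [inner_sub_right]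
      linarith
    -- step 2 : E w = E xs
    have hEw : E w = E xs := by
      set b : H := E xs - E w with hb
      have hineq : ∀ j, (1 / βE) * (inner ℝ (E (x (κ j)) - E w) (Minv (E (x (κ j)) - E w)) : ℝ)
          ≤ inner ℝ (E (x (κ j)) - E w) (x (κ j) - w) := fun j => hcocoz w (κ j)
      -- decompose E (x κj) - E w = e_j + b
      have hsplitQ : ∀ j, (inner ℝ (E (x (κ j)) - E w) (Minv (E (x (κ j)) - E w)) : ℝ)
          = inner ℝ (E (x (κ j)) - E xs) (Minv (E (x (κ j)) - E xs))
            + 2 * inner ℝ (E (x (κ j)) - E xs) (Minv b) + inner ℝ b (Minv b) := by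
        intro j
        have e1 : E (x (κ j)) - E w = (E (x (κ j)) - E xs) + b := by rw [hb]; abel
        rw [e1, map_add, inner_add_left, inner_add_right, inner_add_right]
        have e2 : (inner ℝ b (Minv (E (x (κ j)) - E xs)) : ℝ)
            = inner ℝ (E (x (κ j)) - E xs) (Minv b) := by
          rw [hMinvsym, real_inner_comm]
        rw [e2]; ring
      have hsplitR : ∀ j, (inner ℝ (E (x (κ j)) - E w) (x (κ j) - w) : ℝ)
          = inner ℝ (E (x (κ j)) - E xs) (x (κ j) - w)
            + ((inner ℝ b (x (κ j)) : ℝ) - inner ℝ b w) := by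
        intro j
        have e1 : E (x (κ j)) - E w = (E (x (κ j)) - E xs) + b := by rw [hb]; abel
        rw [e1, inner_add_left, inner_sub_right]
        rw [inner_sub_right]
      -- LHS limit
      have hL1 : Tendsto (fun j => (inner ℝ (E (x (κ j)) - E xs) (Minv (E (x (κ j)) - E xs)) : ℝ))
          atTop (nhds 0) := hQe0.comp hκtop
      have hL2 : Tendsto (fun j => (2 : ℝ) * inner ℝ (E (x (κ j)) - E xs) (Minv b))
          atTop (nhds 0) := by
        have hbnd : ∀ j, ‖(2 : ℝ) * inner ℝ (E (x (κ j)) - E xs) (Minv b)‖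
            ≤ 2 * (‖E (x (κ j)) - E xs‖ * ‖Minv b‖) := by
          intro j
          rw [Real.norm_eq_abs, abs_mul, abs_two]
          have h := abs_real_inner_le_norm (E (x (κ j)) - E xs) (Minv b)
          nlinarith [abs_nonneg ((inner ℝ (E (x (κ j)) - E xs) (Minv b) : ℝ))]
        refine squeeze_zero_norm hbnd ?_
        have := (heκ.mul_const ‖Minv b‖).const_mul (2:ℝ)
        simpa using this
      have hLHS : Tendsto (fun j =>
          (1 / βE) * (inner ℝ (E (x (κ j)) - E w) (Minv (E (x (κ j)) - E w)) : ℝ))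
          atTop (nhds ((1 / βE) * (0 + 0 + inner ℝ b (Minv b)))) := by
        have h := ((hL1.add hL2).add_const ((inner ℝ b (Minv b) : ℝ))).const_mul (1 / βE)
        refine h.congr fun j => ?_
        rw [hsplitQ j]
      -- RHS limit
      have hR1 : Tendsto (fun j => (inner ℝ (E (x (κ j)) - E xs) (x (κ j) - w) : ℝ))
          atTop (nhds 0) := by
        have hbnd : ∀ j, ‖(inner ℝ (E (x (κ j)) - E xs) (x (κ j) - w) : ℝ)‖
            ≤ ‖E (x (κ j)) - E xs‖ * (Rb + ‖w‖) := by
          intro j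
          rw [Real.norm_eq_abs]
          calc |(inner ℝ (E (x (κ j)) - E xs) (x (κ j) - w) : ℝ)|
              ≤ ‖E (x (κ j)) - E xs‖ * ‖x (κ j) - w‖ := abs_real_inner_le_norm _ _
            _ ≤ ‖E (x (κ j)) - E xs‖ * (Rb + ‖w‖) := by
                apply mul_le_mul_of_nonneg_left _ (norm_nonneg _)
                have := norm_sub_le (x (κ j)) w
                have := hxbd (κ j)
                linarith
        refine squeeze_zero_norm hbnd ?_
        simpa using heκ.mul_const (Rb + ‖w‖)
      have hR2 : Tendsto (fun j => ((inner ℝ b (x (κ j)) : ℝ) - inner ℝ b w)) atTop (nhds 0) := by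
        have base' : Tendsto (fun j => (inner ℝ b (x (κ j)) : ℝ)) atTop (nhds (inner ℝ b w)) := by
          have h := hwκ b
          have e3 : (inner ℝ w b : ℝ) = inner ℝ b w := real_inner_comm _ _
          rw [e3] at h
          exact h.congr fun j => real_inner_comm _ _
        have := base'.sub_const ((inner ℝ b w : ℝ))
        simpa using this
      have hRHS : Tendsto (fun j => (inner ℝ (E (x (κ j)) - E w) (x (κ j) - w) : ℝ))
          atTop (nhds (0 + 0)) := by
        have h := hR1.add hR2
        refine h.congr fun j => (hsplitR j).symm
      have hfinal : (1 / βE) * (0 + 0 + (inner ℝ b (Minv b) : ℝ)) ≤ 0 + 0 :=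
        le_of_tendsto_of_tendsto' hLHS hRHS hineq
      have hQb : (inner ℝ b (Minv b) : ℝ) = 0 := by
        have h1 := hQpos b
        have h2 : 0 < 1 / βE := by positivity
        nlinarith
      have hbz : b = 0 := by
        have h3 := hnormQ b
        rw [hQb] at h3
        have h4 : ‖b‖ ^ 2 ≤ 0 := by nlinarith
        have h5 : ‖b‖ = 0 := by nlinarith [sq_nonneg ‖b‖, norm_nonneg b]
        exact norm_eq_zero.mp h5
      rw [hb] at hbz
      have := sub_eq_zero.mp hbz
      exact this.symm
    refine ⟨w, ?_, φ, hκtop, fun y => hw y⟩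
    rw [show -E w = -E xs from by rw [hEw]]
    exact hBw
  -- conclusion via uniqueness of weak subsequential limits
  obtain ⟨wbar, hwbarS, ms0, hms0top, hwbar⟩ := main id tendsto_id
  refine ⟨wbar, hwbarS, ?_⟩
  intro y
  apply tendsto_of_subseq_tendsto
  intro ns hns
  obtain ⟨w, hwS, ms, hmstop, hwconv⟩ := main ns hns
  have hww : w = wbar := by
    obtain ⟨Lw, hLw⟩ := hNconv w hwS
    obtain ⟨Lwb, hLwb⟩ := hNconv wbar hwbarS
    have ht : Tendsto (fun k => ((inner ℝ (x k - w) (M (x k - w)) : ℝ)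
        - inner ℝ (x k - wbar) (M (x k - wbar)))) atTop (nhds (Lw - Lwb)) := hLw.sub hLwb
    set C : ℝ := (inner ℝ w (M w) : ℝ) - inner ℝ wbar (M wbar) with hC
    have hexp : ∀ k, ((inner ℝ (x k - w) (M (x k - w)) : ℝ)
        - inner ℝ (x k - wbar) (M (x k - wbar)))
        = -2 * inner ℝ (x k) (M w) + 2 * inner ℝ (x k) (M wbar) + C := by
      intro k
      have c1 : (inner ℝ w (M (x k)) : ℝ) = inner ℝ (x k) (M w) := by
        rw [← hMsym w (x k)]
        exact real_inner_comm _ _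
      have c2 : (inner ℝ wbar (M (x k)) : ℝ) = inner ℝ (x k) (M wbar) := by
        rw [← hMsym wbar (x k)]
        exact real_inner_comm _ _
      simp only [map_sub, inner_sub_left, inner_sub_right]
      rw [c1, c2, hC]
      ring
    have ht' : Tendsto (fun k => (-2 * (inner ℝ (x k) (M w) : ℝ)
        + 2 * inner ℝ (x k) (M wbar) + C)) atTop (nhds (Lw - Lwb)) :=
      ht.congr hexp
    -- limit along the subsequence converging weakly to w
    have lim1 : Tendsto (fun j => (-2 * (inner ℝ (x (ns (ms j))) (M w) : ℝ)
        + 2 * inner ℝ (x (ns (ms j))) (M wbar) + C)) atTop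
        (nhds (-2 * (inner ℝ w (M w) : ℝ) + 2 * inner ℝ w (M wbar) + C)) :=
      (((hwconv (M w)).const_mul (-2)).add ((hwconv (M wbar)).const_mul 2)).add_const C
    have lim1' : Tendsto (fun j => (-2 * (inner ℝ (x (ns (ms j))) (M w) : ℝ)
        + 2 * inner ℝ (x (ns (ms j))) (M wbar) + C)) atTop (nhds (Lw - Lwb)) :=
      ht'.comp hmstop
    have eq1 : -2 * (inner ℝ w (M w) : ℝ) + 2 * inner ℝ w (M wbar) + C = Lw - Lwb :=
      tendsto_nhds_unique lim1 lim1'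
    -- limit along the subsequence converging weakly to wbar
    have lim2 : Tendsto (fun j => (-2 * (inner ℝ (x (ms0 j)) (M w) : ℝ)
        + 2 * inner ℝ (x (ms0 j)) (M wbar) + C)) atTop
        (nhds (-2 * (inner ℝ wbar (M w) : ℝ) + 2 * inner ℝ wbar (M wbar) + C)) :=
      (((hwbar (M w)).const_mul (-2)).add ((hwbar (M wbar)).const_mul 2)).add_const C
    have lim2' : Tendsto (fun j => (-2 * (inner ℝ (x (ms0 j)) (M w) : ℝ)
        + 2 * inner ℝ (x (ms0 j)) (M wbar) + C)) atTop (nhds (Lw - Lwb)) :=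
      ht'.comp hms0top
    have eq2 : -2 * (inner ℝ wbar (M w) : ℝ) + 2 * inner ℝ wbar (M wbar) + C = Lw - Lwb :=
      tendsto_nhds_unique lim2 lim2'
    -- deduce that the M-seminorm of w - wbar vanishes
    have c3 : (inner ℝ wbar (M w) : ℝ) = inner ℝ w (M wbar) := by
      rw [← hMsym wbar w]
      exact real_inner_comm _ _
    have hNdiff : (inner ℝ (w - wbar) (M (w - wbar)) : ℝ) = 0 := by
      have hexp2 : (inner ℝ (w - wbar) (M (w - wbar)) : ℝ)
          = inner ℝ w (M w) - inner ℝ w (M wbar) - inner ℝ wbar (M w) + inner ℝ wbar (M wbar) := by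
        simp only [map_sub, inner_sub_left, inner_sub_right]
        ring
      rw [hexp2]
      linear_combination (eq2 - eq1) / 2
    have h6 := hcM (w - wbar)
    rw [hNdiff] at h6
    have h9 : ‖w - wbar‖ ^ 2 ≤ 0 := by nlinarith [h6, hc]
    have h9' : ‖w - wbar‖ ^ 2 = 0 := le_antisymm h9 (sq_nonneg _)
    have h7 : ‖w - wbar‖ = 0 := by
      have := sq_eq_zero_iff.mp h9'
      exact this
    have h8 : w - wbar = 0 := norm_eq_zero.mp h7
    exact sub_eq_zero.mp h8
  exact ⟨ms, by rw [← hww]; exact hwconv y⟩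
end
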